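/- arXiv:1609.07581 — 3 statements merged into one kernel-verified Lean document; each statement's English description precedes it below -/
import Mathlib

section
/- The optimal steering fraction S_O is a convex function on assemblages that vanishes on unsteerable assemblages: (i) S_O(σ) = 0 for every unsteerable assemblage σ; (ii) for any two assemblages σ', σ'' (with the same index sets of settings and outcomes) and any μ ∈ [0,1], the assemblage σ with σ_{a|x} = μ σ'_{a|x} + (1 − μ) σ''_{a|x} satisfies S_O(σ) ≤ μ S_O(σ') + (1 − μ) S_O(σ''). -/
open scoped ComplexOrder Kronecker Matrix
open MeasureTheory

noncomputable section

namespace QSteer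

/-- Square complex matrices indexed by `ι` (the Hilbert space `ℂ^ι`). -/
abbrev HMat (ι : Type) : Type := Matrix ι ι ℂ

/-- A density matrix: positive semidefinite with unit trace. -/
def IsDensity {ι : Type} [Fintype ι] (ρ : HMat ι) : Prop :=
  ρ.PosSemidef ∧ ρ.trace = 1

/-- A POVM family `{E_{a|x}}`: positive semidefinite effects summing to the identity
for every setting `x`. -/
def IsPOVM {ι A X : Type} [Fintype ι] [Fintype A] [DecidableEq ι]
    (E : A → X → HMat ι) : Prop :=
  (∀ a x, (E a x).PosSemidef) ∧ ∀ x, ∑ a, E a x = 1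

/-- A projective measurement family: a POVM family whose effects are orthogonal
projections. -/
def IsProjPOVM {ι A X : Type} [Fintype ι] [Fintype A] [DecidableEq ι]
    (E : A → X → HMat ι) : Prop :=
  IsPOVM E ∧ ∀ a x, (E a x).IsHermitian ∧ E a x * E a x = E a x

/-- An assemblage `{σ_{a|x}}`: positive semidefinite matrices such that `∑_a σ_{a|x}`
is the same unit-trace matrix for every `x`. -/
def IsAssemblage {ι A X : Type} [Fintype ι] [Fintype A] (σ : A → X → HMat ι) : Prop :=
  (∀ a x, (σ a x).PosSemidef) ∧ (∀ x x', ∑ a, σ a x = ∑ a, σ a x') ∧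
    ∀ x, (∑ a, σ a x).trace = 1

/-- An unsteerable assemblage: one admitting a local-hidden-state model. -/
def IsUnsteerable {ι A X : Type} [Fintype ι] [Fintype A] (σ : A → X → HMat ι) : Prop :=
  ∃ (n : ℕ) (w : Fin n → ℝ) (p : A → X → Fin n → ℝ) (τ : Fin n → HMat ι),
    (∀ l, 0 ≤ w l) ∧ (∑ l, w l = 1) ∧
    (∀ a x l, 0 ≤ p a x l) ∧ (∀ x l, ∑ a, p a x l = 1) ∧
    (∀ l, IsDensity (τ l)) ∧
    ∀ a x, σ a x = ∑ l, (w l * p a x l) • τ l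

/-- A steering functional `{F_{a|x}}`: a family of positive semidefinite matrices. -/
def IsSteeringFunctional {ι A X : Type} [Fintype ι] (F : A → X → HMat ι) : Prop :=
  ∀ a x, (F a x).PosSemidef

/-- The value `∑_{a,x} tr(F_{a|x} σ_{a|x})` (real part). -/
def steeringValue {ι A X : Type} [Fintype ι] [Fintype A] [Fintype X]
    (F σ : A → X → HMat ι) : ℝ :=
  ∑ x, ∑ a, ((F a x * σ a x).trace).re

/-- The steering bound `ω_s(F)`. -/
def steeringBound {ι A X : Type} [Fintype ι] [Fintype A] [Fintype X]
    (F : A → X → HMat ι) : ℝ :=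
  sSup {r : ℝ | ∃ σ : A → X → HMat ι, IsAssemblage σ ∧ IsUnsteerable σ ∧
    r = steeringValue F σ}

/-- The steering fraction `Γ_s(σ, F)`. -/
def steeringFraction {ι A X : Type} [Fintype ι] [Fintype A] [Fintype X]
    (σ F : A → X → HMat ι) : ℝ :=
  steeringValue F σ / steeringBound F

/-- Partial trace over the first (Alice's) tensor factor. -/
def ptraceA {ιA ιB : Type} [Fintype ιA] (M : Matrix (ιA × ιB) (ιA × ιB) ℂ) : HMat ιB :=
  Matrix.of fun j j' => ∑ i, M (i, j) (i, j')

/-- The assemblage induced by a bipartite state and Alice's POVMs: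
`σ_{a|x} = Tr_A[ρ (E_{a|x} ⊗ I)]`. -/
def inducedAssemblage {ιA ιB A X : Type} [Fintype ιA] [Fintype ιB] [DecidableEq ιB]
    (ρ : Matrix (ιA × ιB) (ιA × ιB) ℂ) (E : A → X → HMat ιA) : A → X → HMat ιB :=
  fun a x => ptraceA (ρ * ((E a x) ⊗ₖ (1 : HMat ιB)))

/-- Largest steering-inequality violation `LV_s(ρ, F)` over Alice POVM families. -/
def LVs {ιA ιB A X : Type} [Fintype ιA] [Fintype ιB] [DecidableEq ιA] [DecidableEq ιB]
    [Fintype A] [Fintype X]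
    (ρ : Matrix (ιA × ιB) (ιA × ιB) ℂ) (F : A → X → HMat ιB) : ℝ :=
  sSup {r : ℝ | ∃ E : A → X → HMat ιA, IsPOVM E ∧
    r = steeringFraction (inducedAssemblage ρ E) F}

/-- Largest steering-inequality violation `LV_s^π(ρ, F)` over projective Alice families. -/
def LVsProj {ιA ιB A X : Type} [Fintype ιA] [Fintype ιB] [DecidableEq ιA] [DecidableEq ιB]
    [Fintype A] [Fintype X]
    (ρ : Matrix (ιA × ιB) (ιA × ιB) ℂ) (F : A → X → HMat ιB) : ℝ :=
  sSup {r : ℝ | ∃ E : A → X → HMat ιA, IsProjPOVM E ∧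
    r = steeringFraction (inducedAssemblage ρ E) F}

/-- The maximally entangled state `|Ψ⁺⟩⟨Ψ⁺|` on `ℂ^ι ⊗ ℂ^ι`. -/
def maxEnt (ι : Type) [Fintype ι] [DecidableEq ι] : Matrix (ι × ι) (ι × ι) ℂ :=
  Matrix.of fun pq rs => if pq.1 = pq.2 ∧ rs.1 = rs.2 then ((Fintype.card ι : ℂ))⁻¹ else 0

/-- The fully entangled fraction `F(ρ) = sup_U ⟨Ψ⁺|(U ⊗ I) ρ (U ⊗ I)†|Ψ⁺⟩`. -/
def fef {ι : Type} [Fintype ι] [DecidableEq ι] (ρ : Matrix (ι × ι) (ι × ι) ℂ) : ℝ :=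
  sSup {r : ℝ | ∃ U : Matrix ι ι ℂ, U ∈ Matrix.unitaryGroup ι ℂ ∧
    r = ((maxEnt ι * ((U ⊗ₖ (1 : HMat ι)) * ρ * ((U ⊗ₖ (1 : HMat ι))ᴴ))).trace).re}

/-- A local-hidden-variable (Bell-local) correlation. -/
def IsLHV {A B X Y : Type} [Fintype A] [Fintype B] (P : A → B → X → Y → ℝ) : Prop :=
  ∃ (n : ℕ) (w : Fin n → ℝ) (pA : A → X → Fin n → ℝ) (pB : B → Y → Fin n → ℝ),
    (∀ l, 0 ≤ w l) ∧ (∑ l, w l = 1) ∧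
    (∀ a x l, 0 ≤ pA a x l) ∧ (∀ x l, ∑ a, pA a x l = 1) ∧
    (∀ b y l, 0 ≤ pB b y l) ∧ (∀ y l, ∑ b, pB b y l = 1) ∧
    ∀ a b x y, P a b x y = ∑ l, w l * pA a x l * pB b y l

/-- The Bell value `∑ B_{ab|xy} P(a,b|x,y)`. -/
def bellValue {A B X Y : Type} [Fintype A] [Fintype B] [Fintype X] [Fintype Y]
    (Bf P : A → B → X → Y → ℝ) : ℝ :=
  ∑ x, ∑ y, ∑ a, ∑ b, Bf a b x y * P a b x y

/-- The local bound `ω(B)`. -/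
def localBound {A B X Y : Type} [Fintype A] [Fintype B] [Fintype X] [Fintype Y]
    (Bf : A → B → X → Y → ℝ) : ℝ :=
  sSup {r : ℝ | ∃ P : A → B → X → Y → ℝ, IsLHV P ∧ r = bellValue Bf P}

/-- The nonlocality fraction `Γ(P, B)`. -/
def nonlocalityFraction {A B X Y : Type} [Fintype A] [Fintype B] [Fintype X] [Fintype Y]
    (P Bf : A → B → X → Y → ℝ) : ℝ :=
  bellValue Bf P / localBound Bf

/-- The quantum correlation `P(a,b|x,y) = tr[ρ (E_{a|x} ⊗ E_{b|y})]`. -/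
def quantumCorr {ιA ιB A B X Y : Type} [Fintype ιA] [Fintype ιB]
    (ρ : Matrix (ιA × ιB) (ιA × ιB) ℂ) (EA : A → X → HMat ιA) (EB : B → Y → HMat ιB) :
    A → B → X → Y → ℝ :=
  fun a b x y => ((ρ * ((EA a x) ⊗ₖ (EB b y))).trace).re

/-- Largest Bell-inequality violation `LV(ρ, B)` over pairs of POVM families. -/
def LV {ιA ιB A B X Y : Type} [Fintype ιA] [Fintype ιB] [DecidableEq ιA] [DecidableEq ιB]
    [Fintype A] [Fintype B] [Fintype X] [Fintype Y]
    (ρ : Matrix (ιA × ιB) (ιA × ιB) ℂ) (Bf : A → B → X → Y → ℝ) : ℝ :=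
  sSup {r : ℝ | ∃ (EA : A → X → HMat ιA) (EB : B → Y → HMat ιB),
    IsPOVM EA ∧ IsPOVM EB ∧ r = nonlocalityFraction (quantumCorr ρ EA EB) Bf}

/-- Largest Bell-inequality violation `LV^π(ρ, B)` over pairs of projective families. -/
def LVProj {ιA ιB A B X Y : Type} [Fintype ιA] [Fintype ιB] [DecidableEq ιA] [DecidableEq ιB]
    [Fintype A] [Fintype B] [Fintype X] [Fintype Y]
    (ρ : Matrix (ιA × ιB) (ιA × ιB) ℂ) (Bf : A → B → X → Y → ℝ) : ℝ :=
  sSup {r : ℝ | ∃ (EA : A → X → HMat ιA) (EB : B → Y → HMat ιB),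
    IsProjPOVM EA ∧ IsProjPOVM EB ∧ r = nonlocalityFraction (quantumCorr ρ EA EB) Bf}

/-- The steering functional induced by a Bell functional and Bob's POVMs:
`F_{a|x} = ∑_{b,y} B_{ab|xy} E_{b|y}`. -/
def inducedF {ιB A B X Y : Type} [Fintype B] [Fintype Y]
    (Bf : A → B → X → Y → ℝ) (EB : B → Y → HMat ιB) : A → X → HMat ιB :=
  fun a x => ∑ y, ∑ b, Bf a b x y • EB b y

/-- The `k`-fold tensor power of a bipartite state, regrouped as a bipartite state on
`ℂ^{d^k} ⊗ ℂ^{d^k}` (Alice's factors grouped together, likewise Bob's). -/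
def tensorPower {ι : Type} (ρ : Matrix (ι × ι) (ι × ι) ℂ) (k : ℕ) :
    Matrix ((Fin k → ι) × (Fin k → ι)) ((Fin k → ι) × (Fin k → ι)) ℂ :=
  Matrix.of fun p q => ∏ t, ρ (p.1 t, p.2 t) (q.1 t, q.2 t)

/-- The isotropic state `ρ_iso(p) = p |Ψ⁺⟩⟨Ψ⁺| + (1-p) I/d²` on `ℂ^d ⊗ ℂ^d`. -/
def iso (d : ℕ) (p : ℝ) : Matrix (Fin d × Fin d) (Fin d × Fin d) ℂ :=
  p • maxEnt (Fin d) + ((1 - p) / (d : ℝ) ^ 2) • (1 : Matrix (Fin d × Fin d) (Fin d × Fin d) ℂ)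

/-- `sup_F Γ_s(σ, F)` over positive semidefinite steering functionals with positive
steering bound. -/
def supFrac {ι A X : Type} [Fintype ι] [Fintype A] [Fintype X] (σ : A → X → HMat ι) : ℝ :=
  sSup {r : ℝ | ∃ F : A → X → HMat ι, IsSteeringFunctional F ∧ 0 < steeringBound F ∧
    r = steeringFraction σ F}

/-- The optimal steering fraction `S_O(σ) = max{0, sup_F Γ_s(σ, F) − 1}`. -/
def SO {ι A X : Type} [Fintype ι] [Fintype A] [Fintype X] (σ : A → X → HMat ι) : ℝ :=
  max 0 (supFrac σ - 1)

/-- The steerable weight `S_W(σ)`. -/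
def SW {ι A X : Type} [Fintype ι] [Fintype A] [Fintype X] (σ : A → X → HMat ι) : ℝ :=
  sInf {ν : ℝ | 0 ≤ ν ∧ ν ≤ 1 ∧ ∃ σUS σS : A → X → HMat ι,
    IsAssemblage σUS ∧ IsUnsteerable σUS ∧ IsAssemblage σS ∧
    ∀ a x, σ a x = (1 - ν) • σUS a x + ν • σS a x}

/-- The steering robustness `S_R(σ)`. -/
def SR {ι A X : Type} [Fintype ι] [Fintype A] [Fintype X] (σ : A → X → HMat ι) : ℝ :=
  sInf {ν : ℝ | 0 ≤ ν ∧ ∃ τ : A → X → HMat ι, IsAssemblage τ ∧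
    IsUnsteerable (fun a x => (1 / (1 + ν)) • σ a x + (ν / (1 + ν)) • τ a x)}

/-- Separability of a bipartite state. -/
def IsSeparable {ιA ιB : Type} [Fintype ιA] [Fintype ιB]
    (ρ : Matrix (ιA × ιB) (ιA × ιB) ℂ) : Prop :=
  ∃ (n : ℕ) (w : Fin n → ℝ) (ρA : Fin n → HMat ιA) (ρB : Fin n → HMat ιB),
    (∀ l, 0 ≤ w l) ∧ (∑ l, w l = 1) ∧ (∀ l, IsDensity (ρA l)) ∧ (∀ l, IsDensity (ρB l)) ∧
    ρ = ∑ l, w l • ((ρA l) ⊗ₖ (ρB l))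

/-- The (unnormalized) output assemblage of a one-way LOCC subchannel acting on an
assemblage: `M(σ)_{a'|x'} = K (∑_{a,x} P(x|x') P(a'|x',a,x) σ_{a|x}) K†`. -/
def wired {ι ι₂ A X A' X' : Type} [Fintype ι] [Fintype A] [Fintype X]
    (K : Matrix ι₂ ι ℂ) (Px : X → X' → ℝ) (Pa : A' → X' → A → X → ℝ)
    (σ : A → X → HMat ι) : A' → X' → HMat ι₂ :=
  fun a' x' => K * (∑ x, ∑ a, (Px x x' * Pa a' x' a x) • σ a x) * Kᴴ

instance matMeasurableSpace {m n : Type} : MeasurableSpace (Matrix m n ℂ) :=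
  inferInstanceAs (MeasurableSpace (m → n → ℂ))

/-- The `(U ⊗ U*)`-twirl of a bipartite state with respect to a measure `μ` on the
unitary group (entrywise Bochner integral). -/
def twirl {ι : Type} [Fintype ι] [DecidableEq ι]
    (μ : Measure (Matrix.unitaryGroup ι ℂ)) (ρ : Matrix (ι × ι) (ι × ι) ℂ) :
    Matrix (ι × ι) (ι × ι) ℂ :=
  Matrix.of fun p q =>
    ∫ V : Matrix.unitaryGroup ι ℂ,
      ((((V : Matrix ι ι ℂ)) ⊗ₖ ((V : Matrix ι ι ℂ).map (starRingEnd ℂ))) * ρ *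
        ((((V : Matrix ι ι ℂ)) ⊗ₖ ((V : Matrix ι ι ℂ).map (starRingEnd ℂ)))ᴴ)) p q ∂μ


section AuxPSD

variable {ι : Type} [Fintype ι]

lemma psd_diag_re_nonneg {M : Matrix ι ι ℂ} (hM : M.PosSemidef) (i : ι) : 0 ≤ (M i i).re := by
  classical
  have h := (Complex.nonneg_iff.mp (hM.diag_nonneg (i := i))).1
  simpa [dotProduct, Matrix.mulVec, Pi.single_apply, Finset.sum_ite_eq,
    Finset.mul_sum, mul_comm] using h

lemma psd_trace_re_nonneg {M : Matrix ι ι ℂ} (hM : M.PosSemidef) : 0 ≤ M.trace.re := by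
  classical
  rw [Matrix.trace, Complex.re_sum]
  exact Finset.sum_nonneg fun i _ => psd_diag_re_nonneg hM i

lemma psd_trace_mul_re_nonneg {A B : Matrix ι ι ℂ} (hA : A.PosSemidef) (hB : B.PosSemidef) :
    0 ≤ ((A * B).trace).re := by
  classical
  have key : ∀ S : Matrix ι ι ℂ, S * S = B → (A * B).trace = (S * A * S).trace := by
    intro S h
    rw [← h, ← Matrix.mul_assoc, Matrix.trace_mul_cycle]
  open scoped MatrixOrder in
  obtain ⟨C, rfl⟩ := CStarAlgebra.nonneg_iff_eq_star_mul_self.mp hB.nonneg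
  have h2 := hA.mul_mul_conjTranspose_same C
  rw [Matrix.star_eq_conjTranspose, ← Matrix.mul_assoc, Matrix.trace_mul_cycle]
  exact psd_trace_re_nonneg h2

lemma one_sub_psd [DecidableEq ι] {ρ : Matrix ι ι ℂ} (hρ : ρ.PosSemidef) (ht : ρ.trace = 1) :
    ((1 : Matrix ι ι ℂ) - ρ).PosSemidef := by
  have hH := hρ.1
  set U : Matrix ι ι ℂ := (hH.eigenvectorUnitary : Matrix ι ι ℂ) with hU
  have hUU : U * star U = 1 := (Matrix.mem_unitaryGroup_iff).mp hH.eigenvectorUnitary.2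
  have hUU' : star U * U = 1 := (Matrix.mem_unitaryGroup_iff').mp hH.eigenvectorUnitary.2
  have hspec : ρ = U * Matrix.diagonal (RCLike.ofReal ∘ hH.eigenvalues) * star U :=
    hH.spectral_theorem
  have htr : ∑ i, hH.eigenvalues i = 1 := by
    have h1 : ρ.trace = ∑ i, (hH.eigenvalues i : ℂ) := by
      conv_lhs => rw [hspec]
      rw [Matrix.trace_mul_cycle, hUU', one_mul, Matrix.trace_diagonal]
      rfl
    rw [ht] at h1
    exact_mod_cast h1.symm
  have hev_le : ∀ i, hH.eigenvalues i ≤ 1 := by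
    intro i
    rw [← htr]
    exact Finset.single_le_sum (fun j _ => hρ.eigenvalues_nonneg j) (Finset.mem_univ i)
  have hrw : (1 : Matrix ι ι ℂ) - ρ =
      U * Matrix.diagonal (fun i => ((1 - hH.eigenvalues i : ℝ) : ℂ)) * star U := by
    have : Matrix.diagonal (fun i => ((1 - hH.eigenvalues i : ℝ) : ℂ)) =
        1 - Matrix.diagonal (RCLike.ofReal ∘ hH.eigenvalues) := by
      rw [← Matrix.diagonal_one, Matrix.diagonal_sub]
      funext i
      simp [Function.comp]
    rw [this, Matrix.mul_sub, Matrix.sub_mul, Matrix.mul_one, hUU, ← hspec]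
  rw [hrw]
  have hdpsd : (Matrix.diagonal (fun i => ((1 - hH.eigenvalues i : ℝ) : ℂ))).PosSemidef := by
    refine Matrix.posSemidef_diagonal_iff.mpr fun i => ?_
    rw [Complex.zero_le_real]
    linarith [hev_le i]
  have := hdpsd.mul_mul_conjTranspose_same U
  rwa [Matrix.star_eq_conjTranspose]

lemma psd_sum {κ : Type} (s : Finset κ) (f : κ → Matrix ι ι ℂ)
    (h : ∀ k ∈ s, (f k).PosSemidef) : (∑ k ∈ s, f k).PosSemidef := by
  classical
  induction s using Finset.induction_on with
  | empty => simpa using Matrix.PosSemidef.zero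
  | insert _ _ hx ih =>
    rw [Finset.sum_insert hx]
    exact (h _ (Finset.mem_insert_self _ _)).add
      (ih fun k hk => h k (Finset.mem_insert_of_mem hk))

lemma psd_real_smul {M : Matrix ι ι ℂ} (hM : M.PosSemidef) {r : ℝ} (hr : 0 ≤ r) :
    (r • M).PosSemidef := by
  refine ⟨?_, fun x => ?_⟩
  · rw [Matrix.IsHermitian, Matrix.conjTranspose_smul, hM.1.eq, star_trivial]
  · exact (hM.smul hr).2 x
end AuxPSD


section AuxSteer
variable {ι A X : Type} [Fintype ι] [Fintype A] [Fintype X]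

/-- The total trace `∑_{x,a} tr(F_{a|x}).re`. -/
def Cval (F : A → X → HMat ι) : ℝ := ∑ x, ∑ a, ((F a x).trace).re

lemma value_le_Cval {F σ : A → X → HMat ι} (hF : IsSteeringFunctional F)
    (hσ : IsAssemblage σ) : steeringValue F σ ≤ Cval F := by
  classical
  refine Finset.sum_le_sum fun x _ => Finset.sum_le_sum fun a _ => ?_
  have hρ : (∑ a', σ a' x).PosSemidef := psd_sum _ _ fun a' _ => hσ.1 a' x
  have h2 : ((∑ a', σ a' x) - σ a x).PosSemidef := by
    have he : (∑ a', σ a' x) - σ a x = ∑ a' ∈ Finset.univ.erase a, σ a' x := by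
      rw [sub_eq_iff_eq_add]
      exact (Finset.sum_erase_add _ _ (Finset.mem_univ a)).symm
    rw [he]
    exact psd_sum _ _ fun a' _ => hσ.1 a' x
  have h3 := one_sub_psd hρ (hσ.2.2 x)
  have h1 : ((1 : HMat ι) - σ a x).PosSemidef := by
    have he : (1 : HMat ι) - σ a x =
        (1 - ∑ a', σ a' x) + ((∑ a', σ a' x) - σ a x) := by
      rw [sub_add_sub_cancel]
    rw [he]
    exact h3.add h2
  have h4 := psd_trace_mul_re_nonneg (hF a x) h1
  have h5 : (F a x * ((1 : HMat ι) - σ a x)).trace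
      = (F a x).trace - (F a x * σ a x).trace := by
    rw [Matrix.mul_sub, Matrix.mul_one, Matrix.trace_sub]
  rw [h5, Complex.sub_re] at h4
  linarith

lemma bddAbove_boundSet {F : A → X → HMat ι} (hF : IsSteeringFunctional F) :
    BddAbove {r : ℝ | ∃ σ : A → X → HMat ι, IsAssemblage σ ∧ IsUnsteerable σ ∧
      r = steeringValue F σ} := by
  refine ⟨Cval F, ?_⟩
  rintro r ⟨σ, hσ, -, rfl⟩
  exact value_le_Cval hF hσ

lemma value_le_bound {F σ : A → X → HMat ι} (hF : IsSteeringFunctional F)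
    (hσ : IsAssemblage σ) (hus : IsUnsteerable σ) :
    steeringValue F σ ≤ steeringBound F :=
  le_csSup (bddAbove_boundSet hF) ⟨σ, hσ, hus, rfl⟩

lemma nonempty_of_bound_pos {F : A → X → HMat ι} (hb : 0 < steeringBound F) :
    Nonempty ι ∧ Nonempty A ∧ Nonempty X := by
  classical
  have hX : Nonempty X := by
    by_contra h
    have hE : IsEmpty X := not_nonempty_iff.mp h
    have hle : steeringBound F ≤ 0 := by
      refine Real.sSup_le ?_ le_rfl
      rintro r ⟨σ, -, -, rfl⟩
      rw [steeringValue]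
      simp [Finset.univ_eq_empty]
    linarith
  have hne : {r : ℝ | ∃ σ : A → X → HMat ι, IsAssemblage σ ∧ IsUnsteerable σ ∧
      r = steeringValue F σ}.Nonempty := by
    by_contra h
    rw [Set.not_nonempty_iff_eq_empty] at h
    rw [steeringBound, h, Real.sSup_empty] at hb
    exact lt_irrefl 0 hb
  obtain ⟨r, σ, hσ, ⟨n, w, p, τ, hw0, hw1, hp0, hp1, hτ, hmod⟩, -⟩ := hne
  have hn : n ≠ 0 := by
    rintro rfl
    simp at hw1
  have hι : Nonempty ι := by
    by_contra h
    have hE : IsEmpty ι := not_nonempty_iff.mp h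
    have hτl := (hτ ⟨0, Nat.pos_of_ne_zero hn⟩).2
    rw [Matrix.trace] at hτl
    simp [Finset.univ_eq_empty] at hτl
  have hA : Nonempty A := by
    by_contra h
    have hE : IsEmpty A := not_nonempty_iff.mp h
    have := hp1 (Classical.arbitrary X) ⟨0, Nat.pos_of_ne_zero hn⟩
    simp [Finset.univ_eq_empty] at this
  exact ⟨hι, hA, hX⟩

lemma exists_uniform (hι : Nonempty ι) (hA : Nonempty A) :
    ∃ τ : A → X → HMat ι, IsAssemblage τ ∧ IsUnsteerable τ ∧
      ∀ F : A → X → HMat ι, steeringValue F τ =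
        ((Fintype.card A : ℝ) * (Fintype.card ι : ℝ))⁻¹ * Cval F := by
  classical
  have hcA : (0 : ℝ) < (Fintype.card A : ℝ) := by
    exact_mod_cast Fintype.card_pos
  have hcι : (0 : ℝ) < (Fintype.card ι : ℝ) := by
    exact_mod_cast Fintype.card_pos
  set ρ0 : HMat ι := (((Fintype.card ι : ℝ)⁻¹ : ℝ) : ℂ) • 1 with hρ0
  have hρ0psd : ρ0.PosSemidef := by
    rw [hρ0, Matrix.smul_one_eq_diagonal]
    refine Matrix.posSemidef_diagonal_iff.mpr fun i => ?_
    rw [Complex.zero_le_real]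
    positivity
  have hρ0tr : ρ0.trace = 1 := by
    rw [hρ0, Matrix.trace_smul, Matrix.trace_one]
    rw [smul_eq_mul]
    rw [← Complex.ofReal_natCast, ← Complex.ofReal_mul, ← Complex.ofReal_one]
    congr 1
    field_simp
  refine ⟨fun _ _ => ((Fintype.card A : ℝ)⁻¹ : ℝ) • ρ0, ⟨?_, ?_, ?_⟩, ?_, ?_⟩
  · exact fun a x => psd_real_smul hρ0psd (by positivity)
  · intro x x'
    rfl
  · intro x
    rw [Finset.sum_const, Finset.card_univ, ← Nat.cast_smul_eq_nsmul ℝ, smul_smul,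
      Matrix.trace_smul, hρ0tr, mul_inv_cancel₀ hcA.ne', one_smul]
  · refine ⟨1, fun _ => 1, fun _ _ _ => (Fintype.card A : ℝ)⁻¹, fun _ => ρ0,
      fun _ => zero_le_one, by simp, fun _ _ _ => by positivity, fun _ _ => ?_, fun _ => ⟨hρ0psd, hρ0tr⟩, fun a x => ?_⟩
    · rw [Finset.sum_const, Finset.card_univ, nsmul_eq_mul]
      field_simp
    · rw [Fin.sum_univ_one, one_mul]
  · intro F
    rw [steeringValue, Cval, Finset.mul_sum]
    refine Finset.sum_congr rfl fun x _ => ?_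
    rw [Finset.mul_sum]
    refine Finset.sum_congr rfl fun a _ => ?_
    rw [hρ0, Matrix.mul_smul, Matrix.mul_smul, Matrix.mul_one, Matrix.trace_smul,
      Matrix.trace_smul, Complex.real_smul, Complex.re_ofReal_mul, smul_eq_mul,
      Complex.re_ofReal_mul, mul_inv]
    ring

lemma frac_le_card {F σ : A → X → HMat ι} (hF : IsSteeringFunctional F)
    (hb : 0 < steeringBound F) (hσ : IsAssemblage σ) :
    steeringFraction σ F ≤ (Fintype.card A : ℝ) * (Fintype.card ι : ℝ) := by
  obtain ⟨hι, hA, hX⟩ := nonempty_of_bound_pos hb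
  obtain ⟨τ, hτa, hτu, hτv⟩ := exists_uniform (ι := ι) (A := A) (X := X) hι hA
  set K : ℝ := (Fintype.card A : ℝ) * (Fintype.card ι : ℝ) with hK
  have hKpos : 0 < K := by
    have h1 : (0 : ℝ) < (Fintype.card A : ℝ) := by exact_mod_cast Fintype.card_pos
    have h2 : (0 : ℝ) < (Fintype.card ι : ℝ) := by exact_mod_cast Fintype.card_pos
    exact mul_pos h1 h2
  have h1 : steeringValue F σ ≤ Cval F := value_le_Cval hF hσ
  have h2 : Cval F = K * steeringValue F τ := by
    rw [hτv F, ← mul_assoc, mul_inv_cancel₀ hKpos.ne', one_mul]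
  have h3 : steeringValue F τ ≤ steeringBound F := value_le_bound hF hτa hτu
  rw [steeringFraction, div_le_iff₀ hb]
  calc steeringValue F σ ≤ Cval F := h1
    _ = K * steeringValue F τ := h2
    _ ≤ K * steeringBound F := by
        exact mul_le_mul_of_nonneg_left h3 hKpos.le

lemma bddAbove_fracSet {σ : A → X → HMat ι} (hσ : IsAssemblage σ) :
    BddAbove {r : ℝ | ∃ F : A → X → HMat ι, IsSteeringFunctional F ∧
      0 < steeringBound F ∧ r = steeringFraction σ F} := by
  refine ⟨(Fintype.card A : ℝ) * (Fintype.card ι : ℝ), ?_⟩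
  rintro r ⟨F, hF, hb, rfl⟩
  exact frac_le_card hF hb hσ

lemma frac_le_SO_add_one {F σ : A → X → HMat ι} (hF : IsSteeringFunctional F)
    (hb : 0 < steeringBound F) (hσ : IsAssemblage σ) :
    steeringFraction σ F ≤ SO σ + 1 := by
  have h1 : steeringFraction σ F ≤ supFrac σ :=
    le_csSup (bddAbove_fracSet hσ) ⟨F, hF, hb, rfl⟩
  have h2 : supFrac σ - 1 ≤ SO σ := le_max_right _ _
  linarith

end AuxSteer

/-- Lemma 2: the optimal steering fraction `S_O` vanishes on unsteerable
assemblages and is convex on assemblages. -/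
theorem stmt10 {ι A X : Type} [Fintype ι] [Fintype A] [Fintype X] :
    (∀ σ : A → X → HMat ι, IsAssemblage σ → IsUnsteerable σ → SO σ = 0) ∧
    (∀ (σ' σ'' : A → X → HMat ι) (μ : ℝ), IsAssemblage σ' → IsAssemblage σ'' →
      0 ≤ μ → μ ≤ 1 →
      SO (fun a x => μ • σ' a x + (1 - μ) • σ'' a x) ≤
        μ * SO σ' + (1 - μ) * SO σ'') := by
  classical
  constructor
  · intro σ hσ hus
    have h1 : supFrac σ ≤ 1 := by
      refine Real.sSup_le ?_ zero_le_one
      rintro r ⟨F, hF, hb, rfl⟩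
      rw [steeringFraction, div_le_one hb]
      exact value_le_bound hF hσ hus
    rw [SO]
    exact max_eq_left (by linarith)
  · intro σ' σ'' μ h1 h2 hμ0 hμ1
    have hSO' : 0 ≤ SO σ' := le_max_left _ _
    have hSO'' : 0 ≤ SO σ'' := le_max_left _ _
    have hμ1' : (0:ℝ) ≤ 1 - μ := by linarith
    have hRHS : 0 ≤ μ * SO σ' + (1 - μ) * SO σ'' :=
      add_nonneg (mul_nonneg hμ0 hSO') (mul_nonneg hμ1' hSO'')
    rw [SO]
    refine max_le hRHS ?_
    rw [sub_le_iff_le_add]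
    refine Real.sSup_le ?_ (by linarith)
    rintro r ⟨F, hF, hb, rfl⟩
    have hval : steeringValue F (fun a x => μ • σ' a x + (1 - μ) • σ'' a x)
        = μ * steeringValue F σ' + (1 - μ) * steeringValue F σ'' := by
      rw [steeringValue, steeringValue, steeringValue, Finset.mul_sum, Finset.mul_sum,
        ← Finset.sum_add_distrib]
      refine Finset.sum_congr rfl fun x _ => ?_
      rw [Finset.mul_sum, Finset.mul_sum, ← Finset.sum_add_distrib]
      refine Finset.sum_congr rfl fun a _ => ?_
      rw [Matrix.mul_add, Matrix.mul_smul, Matrix.mul_smul, Matrix.trace_add,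
        Matrix.trace_smul, Matrix.trace_smul, Complex.add_re, Complex.real_smul,
        Complex.real_smul, Complex.re_ofReal_mul, Complex.re_ofReal_mul]
    have hsplit : steeringFraction (fun a x => μ • σ' a x + (1 - μ) • σ'' a x) F
        = μ * steeringFraction σ' F + (1 - μ) * steeringFraction σ'' F := by
      rw [steeringFraction, steeringFraction, steeringFraction, hval]
      ring
    rw [hsplit]
    have k1 := frac_le_SO_add_one hF hb h1
    have k2 := frac_le_SO_add_one hF hb h2
    have m1 := mul_le_mul_of_nonneg_left k1 hμ0
    have m2 := mul_le_mul_of_nonneg_left k2 hμ1'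
    linarith


end QSteer

end
end

section
/- Let σ be an assemblage with steering robustness S_R(σ) and let σ̃ be an assemblage achieving it, i.e. such that σ^{US} := (1/(1 + S_R(σ))) σ + (S_R(σ)/(1 + S_R(σ))) σ̃ is unsteerable. Then S_R(σ) · S_O(σ̃) − 2 ≤ S_O(σ) ≤ S_R(σ) · [S_O(σ̃) + 2], where S_O denotes the optimal steering fraction. -/
open scoped ComplexOrder Kronecker Matrix
open MeasureTheory

noncomputable section

namespace QSteer

section Stmt14Aux

variable {ι A X : Type} [Fintype ι] [Fintype A] [Fintype X]

lemma aux14_diag_re_nonneg {M : HMat ι} (hM : M.PosSemidef) (i : ι) :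
    0 ≤ (M i i).re := by
  classical
  have := hM.re_dotProduct_nonneg (Pi.single i 1)
  simpa [dotProduct, Matrix.mulVec, Pi.single_apply, Finset.mul_sum] using this

lemma aux14_trace_re_nonneg {M : HMat ι} (hM : M.PosSemidef) :
    0 ≤ (M.trace).re := by
  classical
  simpa [Matrix.trace, Matrix.diag, Complex.re_sum] using
    Finset.sum_nonneg (fun i (_ : i ∈ Finset.univ) => aux14_diag_re_nonneg hM i)

lemma aux14_diag_re_eq (B : Matrix ι ι ℂ) (i : ι) :
    ((Bᴴ * B) i i).re = ∑ k, ‖B k i‖ ^ 2 := by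
  rw [Matrix.mul_apply, Complex.re_sum]
  refine Finset.sum_congr rfl fun k _ => ?_
  rw [Matrix.conjTranspose_apply, Complex.star_def, ← Complex.normSq_eq_conj_mul_self]
  rw [Complex.ofReal_re, Complex.normSq_eq_norm_sq]

lemma aux14_entry_norm_le {M : HMat ι} (hM : M.PosSemidef) (i j : ι) :
    ‖M i j‖ ≤ (M i i).re + (M j j).re := by
  classical
  obtain ⟨B, rfl⟩ : ∃ B : HMat ι, M = Bᴴ * B := by
    open scoped MatrixOrder Matrix.Norms.L2Operator in
    exact CStarAlgebra.nonneg_iff_eq_star_mul_self.mp hM.nonneg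
  have hij : (Bᴴ * B) i j = ∑ k, (starRingEnd ℂ) (B k i) * B k j := by
    simp [Matrix.mul_apply, Matrix.conjTranspose_apply]
  calc ‖(Bᴴ * B) i j‖ ≤ ∑ k, ‖(starRingEnd ℂ) (B k i) * B k j‖ := by
        rw [hij]; exact norm_sum_le _ _
    _ ≤ ∑ k, (‖B k i‖ ^ 2 + ‖B k j‖ ^ 2) := by
        apply Finset.sum_le_sum; intro k _
        rw [norm_mul, RingHomIsometric.norm_map]
        nlinarith [norm_nonneg (B k i), norm_nonneg (B k j), sq_nonneg (‖B k i‖ - ‖B k j‖)]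
    _ = ((Bᴴ * B) i i).re + ((Bᴴ * B) j j).re := by
        rw [aux14_diag_re_eq, aux14_diag_re_eq, Finset.sum_add_distrib]

lemma aux14_trace_re_prod_nonneg {M N : HMat ι}
    (hM : M.PosSemidef) (hN : N.PosSemidef) : 0 ≤ ((M * N).trace).re := by
  classical
  obtain ⟨B, rfl⟩ : ∃ B : HMat ι, M = Bᴴ * B := by
    open scoped MatrixOrder Matrix.Norms.L2Operator in
    exact CStarAlgebra.nonneg_iff_eq_star_mul_self.mp hM.nonneg
  have h : (Bᴴ * B * N).trace = (B * N * Bᴴ).trace := by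
    rw [Matrix.mul_assoc, Matrix.trace_mul_comm]
  rw [h]
  exact aux14_trace_re_nonneg (hN.mul_mul_conjTranspose_same B)

lemma aux14_trace_prod_re_le (M N : HMat ι) (c : ℝ)
    (hc : ∀ i j, ‖N i j‖ ≤ c) :
    ((M * N).trace).re ≤ ∑ i, ∑ j, ‖M i j‖ * c := by
  classical
  have h : (M * N).trace = ∑ i, ∑ j, M i j * N j i := by
    simp [Matrix.trace, Matrix.diag, Matrix.mul_apply]
  calc ((M * N).trace).re ≤ ‖(M * N).trace‖ := Complex.re_le_norm _
    _ ≤ ∑ i, ∑ j, ‖M i j * N j i‖ := by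
        rw [h]; exact (norm_sum_le _ _).trans (Finset.sum_le_sum fun i _ => norm_sum_le _ _)
    _ ≤ ∑ i, ∑ j, ‖M i j‖ * c := by
        apply Finset.sum_le_sum; intro i _; apply Finset.sum_le_sum; intro j _
        rw [norm_mul]; exact mul_le_mul_of_nonneg_left (hc j i) (norm_nonneg _)

lemma aux14_psd_smul {M : HMat ι} (hM : M.PosSemidef) {c : ℝ} (hc : 0 ≤ c) :
    (c • M).PosSemidef := by
  constructor
  · show (c • M)ᴴ = c • M
    ext i j
    rw [Matrix.conjTranspose_apply, Matrix.smul_apply, Matrix.smul_apply,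
      star_smul, star_trivial]
    congr 1
    calc star (M j i) = Mᴴ i j := rfl
      _ = M i j := by rw [hM.1]
  · exact (hM.smul hc).2

lemma aux14_sv_comb (F f g : A → X → HMat ι) (c d : ℝ) :
    steeringValue F (fun a x => c • f a x + d • g a x)
      = c * steeringValue F f + d * steeringValue F g := by
  unfold steeringValue
  rw [Finset.mul_sum, Finset.mul_sum, ← Finset.sum_add_distrib]
  refine Finset.sum_congr rfl fun x _ => ?_
  rw [Finset.mul_sum, Finset.mul_sum, ← Finset.sum_add_distrib]
  refine Finset.sum_congr rfl fun a _ => ?_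
  have : F a x * (c • f a x + d • g a x) = c • (F a x * f a x) + d • (F a x * g a x) := by
    rw [mul_add, mul_smul_comm, mul_smul_comm]
  rw [this, Matrix.trace_add, Matrix.trace_smul, Matrix.trace_smul, Complex.add_re,
    Complex.real_smul, Complex.real_smul, Complex.re_ofReal_mul, Complex.re_ofReal_mul]

lemma aux14_sv_nonneg {F σ' : A → X → HMat ι} (hF : IsSteeringFunctional F)
    (hσ' : ∀ a x, (σ' a x).PosSemidef) : 0 ≤ steeringValue F σ' :=
  Finset.sum_nonneg fun x _ => Finset.sum_nonneg fun a _ =>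
    aux14_trace_re_prod_nonneg (hF a x) (hσ' a x)

lemma aux14_psd_sum {s : Finset A} {f : A → HMat ι} (h : ∀ a ∈ s, (f a).PosSemidef) :
    (∑ a ∈ s, f a).PosSemidef := by
  classical
  induction s using Finset.induction with
  | empty => simpa using Matrix.PosSemidef.zero
  | insert _ _ hni ih =>
    rw [Finset.sum_insert hni]
    exact (h _ (Finset.mem_insert_self _ _)).add
      (ih fun a ha => h a (Finset.mem_insert_of_mem ha))

lemma aux14_assemblage_entry_le {σ' : A → X → HMat ι} (hσ' : IsAssemblage σ')
    (a : A) (x : X) (i j : ι) : ‖σ' a x i j‖ ≤ 2 := by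
  classical
  have hdiag : ∀ k, (σ' a x k k).re ≤ 1 := by
    intro k
    have hS : (∑ a', σ' a' x).PosSemidef := aux14_psd_sum fun a' _ => hσ'.1 a' x
    have h1 : (σ' a x k k).re ≤ ((∑ a', σ' a' x) k k).re := by
      have : ((∑ a', σ' a' x) k k) = ∑ a', σ' a' x k k := by
        simp [Matrix.sum_apply]
      rw [this, Complex.re_sum]
      exact Finset.single_le_sum (fun a' _ => aux14_diag_re_nonneg (hσ'.1 a' x) k)
        (Finset.mem_univ a)
    have h2 : ((∑ a', σ' a' x) k k).re ≤ ((∑ a', σ' a' x).trace).re := by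
      rw [Matrix.trace, Complex.re_sum]
      exact Finset.single_le_sum (fun l _ => aux14_diag_re_nonneg hS l) (Finset.mem_univ k)
    have h3 : ((∑ a', σ' a' x).trace).re = 1 := by rw [hσ'.2.2 x]; simp
    linarith
  calc ‖σ' a x i j‖ ≤ (σ' a x i i).re + (σ' a x j j).re := aux14_entry_norm_le (hσ'.1 a x) i j
    _ ≤ 2 := by linarith [hdiag i, hdiag j]

lemma aux14_bddAbove (F : A → X → HMat ι) :
    BddAbove {r : ℝ | ∃ σ' : A → X → HMat ι, IsAssemblage σ' ∧ IsUnsteerable σ' ∧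
      r = steeringValue F σ'} := by
  refine ⟨∑ x, ∑ a, ∑ i, ∑ j, ‖F a x i j‖ * 2, ?_⟩
  rintro r ⟨σ', hσ', -, rfl⟩
  refine Finset.sum_le_sum fun x _ => Finset.sum_le_sum fun a _ => ?_
  exact aux14_trace_prod_re_le (F a x) (σ' a x) 2
    (fun i j => aux14_assemblage_entry_le hσ' a x i j)

end Stmt14Aux

/-- Proposition 2: for an assemblage `σ̃` achieving the steering
robustness of `σ` (i.e. the corresponding mixture is unsteerable),
`S_R(σ)·S_O(σ̃) − 2 ≤ S_O(σ) ≤ S_R(σ)·[S_O(σ̃) + 2]`. -/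
theorem stmt14 {ι A X : Type} [Fintype ι] [Fintype A] [Fintype X]
    (σ τ : A → X → HMat ι) (hσ : IsAssemblage σ) (hτ : IsAssemblage τ)
    (hmix : IsUnsteerable
      (fun a x => (1 / (1 + SR σ)) • σ a x + (SR σ / (1 + SR σ)) • τ a x)) :
    SR σ * SO τ - 2 ≤ SO σ ∧ SO σ ≤ SR σ * (SO τ + 2) := by
  classical
  set r := SR σ with hrdef
  have hr : 0 ≤ r := Real.sInf_nonneg fun x hx => hx.1
  have h1p : (0:ℝ) < 1 + r := by linarith
  set c1 : ℝ := 1 / (1 + r) with hc1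
  set c2 : ℝ := r / (1 + r) with hc2
  have hc1n : 0 ≤ c1 := by positivity
  have hc2n : 0 ≤ c2 := div_nonneg hr h1p.le
  have hc12 : c1 + c2 = 1 := by rw [hc1, hc2]; field_simp
  set mix : A → X → HMat ι := fun a x => c1 • σ a x + c2 • τ a x with hmixdef
  -- mix is an assemblage
  have hmixA : IsAssemblage mix := by
    refine ⟨fun a x => (aux14_psd_smul (hσ.1 a x) hc1n).add (aux14_psd_smul (hτ.1 a x) hc2n),
      fun x x' => ?_, fun x => ?_⟩
    · simp only [hmixdef, Finset.sum_add_distrib, ← Finset.smul_sum]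
      rw [hσ.2.1 x x', hτ.2.1 x x']
    · have : ∑ a, mix a x = c1 • (∑ a, σ a x) + c2 • (∑ a, τ a x) := by
        simp only [hmixdef, Finset.sum_add_distrib, ← Finset.smul_sum]
      rw [this, Matrix.trace_add, Matrix.trace_smul, Matrix.trace_smul,
        hσ.2.2 x, hτ.2.2 x]
      rw [Complex.real_smul, Complex.real_smul, mul_one, mul_one, ← Complex.ofReal_add]
      exact_mod_cast congrArg (fun t : ℝ => (t : ℂ)) hc12
  -- value identity for any functional
  have hval : ∀ F : A → X → HMat ι,
      steeringValue F mix = c1 * steeringValue F σ + c2 * steeringValue F τ := by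
    intro F; exact aux14_sv_comb F σ τ c1 c2
  -- mix value bounded by steering bound
  have hmixle : ∀ F : A → X → HMat ι, steeringValue F mix ≤ steeringBound F := by
    intro F
    exact le_csSup (aux14_bddAbove F) ⟨mix, hmixA, hmix, rfl⟩
  have hSOσ0 : (0:ℝ) ≤ SO σ := le_max_left _ _
  have hSOτ0 : (0:ℝ) ≤ SO τ := le_max_left _ _
  constructor
  · -- lower bound
    rcases eq_or_lt_of_le hr with hr0 | hrpos
    · rw [← hr0, zero_mul]; linarith
    · have hτle : SO τ ≤ 1 / r := by
        have hsup : supFrac τ ≤ 1 + 1 / r := by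
          apply Real.sSup_le
          · rintro z ⟨F, hF, hω, rfl⟩
            rw [steeringFraction, div_le_iff₀ hω]
            have h1 := hmixle F
            rw [hval F] at h1
            have h2 : 0 ≤ steeringValue F σ := aux14_sv_nonneg hF hσ.1
            have hb0 : 0 ≤ steeringBound F := hω.le
            have : c2 * steeringValue F τ ≤ steeringBound F := by
              have := aux14_sv_nonneg hF hτ.1
              nlinarith
            rw [hc2] at this
            rw [div_mul_eq_mul_div, div_le_iff₀ h1p] at this
            have h1r : (1 + 1/r) * r = 1 + r := by field_simp; ring
            refine le_of_mul_le_mul_right ?_ hrpos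
            calc steeringValue F τ * r = r * steeringValue F τ := mul_comm _ _
              _ ≤ steeringBound F * (1 + r) := this
              _ = steeringBound F * ((1 + 1/r) * r) := by rw [h1r]
              _ = (1 + 1/r) * steeringBound F * r := by ring
          · positivity
        have : supFrac τ - 1 ≤ 1 / r := by linarith
        exact max_le (by positivity) this
      have : r * SO τ ≤ 1 := by
        rw [mul_comm]
        calc SO τ * r ≤ (1/r) * r := mul_le_mul_of_nonneg_right hτle hr
          _ = 1 := by field_simp
      linarith
  · -- upper bound
    have hσle : SO σ ≤ r := by
      have hsup : supFrac σ ≤ 1 + r := by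
        apply Real.sSup_le
        · rintro z ⟨F, hF, hω, rfl⟩
          rw [steeringFraction, div_le_iff₀ hω]
          have h1 := hmixle F
          rw [hval F] at h1
          have h2 : 0 ≤ steeringValue F τ := aux14_sv_nonneg hF hτ.1
          have hb0 : 0 ≤ steeringBound F := hω.le
          have hc1' : c1 * steeringValue F σ ≤ steeringBound F := by nlinarith
          rw [hc1, div_mul_eq_mul_div, div_le_iff₀ h1p, one_mul] at hc1'
          linarith [mul_le_mul_of_nonneg_right (le_refl (steeringBound F)) hr]
        · linarith
      exact max_le hr (by linarith)
    have : r ≤ r * (SO τ + 2) := by nlinarith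
    linarith

end QSteer

end
end

section
/- (Sufficient condition for Bell nonlocality.) Let ρ be a density matrix on ℂ^d ⊗ ℂ^d and let B = {B_{ab|xy}} be a Bell functional with nonnegative coefficients and ω(B) > 0. If the fully entangled fraction satisfies F(ρ) > 1 / LV(|Ψ_d^+⟩⟨Ψ_d^+|, B), then ρ violates the Bell inequality specified by B: there exist POVM families E_A for Alice and E_B for Bob on ℂ^d such that the quantum correlation P(a,b|x,y) = tr[ρ (E_{a|x} ⊗ E_{b|y})] satisfies Γ(P, B) > 1; in particular, ρ is Bell nonlocal. -/
open scoped ComplexOrder Kronecker Matrix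
open MeasureTheory

noncomputable section

namespace QSteer

/-! ### Auxiliary lemmas for stmt17 -/

section Stmt17Aux

open Matrix

lemma re_nonneg_of_cnonneg {z : ℂ} (h : 0 ≤ z) : 0 ≤ z.re := by
  rw [Complex.le_def] at h; simpa using h.1

lemma im_zero_of_cnonneg {z : ℂ} (h : 0 ≤ z) : z.im = 0 := by
  rw [Complex.le_def] at h; simpa using h.2.symm

lemma psd_diag_nonneg {n : Type} [Fintype n] [DecidableEq n] {M : Matrix n n ℂ}
    (hM : M.PosSemidef) (i : n) : 0 ≤ M i i := by
  exact hM.diag_nonneg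

lemma psd_trace_nonneg {n : Type} [Fintype n] [DecidableEq n] {M : Matrix n n ℂ}
    (hM : M.PosSemidef) : 0 ≤ M.trace := by
  rw [Matrix.trace]
  exact Finset.sum_nonneg fun i _ => psd_diag_nonneg hM i

lemma psd_mul_trace_nonneg {n : Type} [Fintype n] [DecidableEq n] {M N : Matrix n n ℂ}
    (hM : M.PosSemidef) (hN : N.PosSemidef) : 0 ≤ (M * N).trace := by
  open scoped MatrixOrder in
  obtain ⟨a, rfl⟩ := CStarAlgebra.nonneg_iff_eq_star_mul_self.mp hM.nonneg
  rw [Matrix.mul_assoc, Matrix.trace_mul_comm, Matrix.star_eq_conjTranspose]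
  exact psd_trace_nonneg (hN.mul_mul_conjTranspose_same a)

lemma kron_conjTranspose {m n : Type} (A : Matrix m m ℂ) (B : Matrix n n ℂ) :
    (A ⊗ₖ B)ᴴ = Aᴴ ⊗ₖ Bᴴ := by
  ext ⟨i, j⟩ ⟨k, l⟩
  simp [Matrix.conjTranspose_apply, mul_comm]

lemma kron_psd {m n : Type} [Fintype m] [Fintype n] [DecidableEq m] [DecidableEq n]
    {A : Matrix m m ℂ} {B : Matrix n n ℂ} (hA : A.PosSemidef) (hB : B.PosSemidef) :
    (A ⊗ₖ B).PosSemidef := by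
  exact hA.kronecker hB

lemma smul_psd {n : Type} [Fintype n] [DecidableEq n] {M : Matrix n n ℂ} (hM : M.PosSemidef)
    {r : ℝ} (hr : 0 ≤ r) : ((r : ℂ) • M).PosSemidef := by
  exact hM.smul (by exact_mod_cast hr : (0:ℂ) ≤ (r:ℂ))

lemma sum_psd {n : Type} [Fintype n] [DecidableEq n] {ι : Type*} (s : Finset ι)
    (f : ι → Matrix n n ℂ) (hf : ∀ i ∈ s, (f i).PosSemidef) : (∑ i ∈ s, f i).PosSemidef := by
  classical
  induction s using Finset.induction with
  | empty => simpa using Matrix.PosSemidef.zero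
  | @insert a s ha ih =>
    rw [Finset.sum_insert ha]
    exact (hf _ (Finset.mem_insert_self _ _)).add
      (ih fun i hi => hf i (Finset.mem_insert_of_mem hi))

section MaxEntLemmas

variable (ι : Type) [Fintype ι] [DecidableEq ι]

lemma maxEnt_conjTranspose : (maxEnt ι)ᴴ = maxEnt ι := by
  ext ⟨p, q⟩ ⟨r, s⟩
  simp only [maxEnt, Matrix.conjTranspose_apply, Matrix.of_apply, apply_ite, map_zero, map_inv₀,
    map_natCast]
  by_cases h1 : p = q <;> by_cases h2 : r = s <;> simp [h1, h2, and_comm]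

lemma maxEnt_trace [Nonempty ι] : (maxEnt ι).trace = 1 := by
  have hcard : (Fintype.card ι : ℂ) ≠ 0 := by
    exact_mod_cast Fintype.card_ne_zero
  rw [Matrix.trace]
  simp only [Matrix.diag, maxEnt, Matrix.of_apply, and_self]
  rw [Fintype.sum_prod_type]
  simp [Finset.sum_ite_eq, Finset.card_univ, mul_inv_cancel₀ hcard]

lemma maxEnt_mulVec (x : ι × ι → ℂ) :
    (maxEnt ι) *ᵥ x = fun pq =>
      if pq.1 = pq.2 then ((Fintype.card ι : ℂ))⁻¹ * ∑ r, x (r, r) else 0 := by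
  funext ⟨p, q⟩
  simp only [Matrix.mulVec, dotProduct, maxEnt, Matrix.of_apply]
  rw [Fintype.sum_prod_type]
  by_cases h : p = q
  · simp [h, ite_and, ite_mul, Finset.sum_ite_eq, Finset.mul_sum]
  · simp [h]

lemma maxEnt_psd : (maxEnt ι).PosSemidef := by
  refine Matrix.PosSemidef.of_dotProduct_mulVec_nonneg ?_ ?_
  · exact maxEnt_conjTranspose ι
  · intro x
    rw [maxEnt_mulVec]
    have hdot : star x ⬝ᵥ (fun pq : ι × ι =>
        if pq.1 = pq.2 then ((Fintype.card ι : ℂ))⁻¹ * ∑ r, x (r, r) else 0)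
        = ((Fintype.card ι : ℂ))⁻¹ *
          ((starRingEnd ℂ) (∑ r, x (r, r)) * (∑ r, x (r, r))) := by
      simp only [dotProduct, Pi.star_apply]
      rw [Fintype.sum_prod_type]
      have hp : ∀ p : ι, ∑ q : ι, star (x (p, q)) *
          (if p = q then ((Fintype.card ι : ℂ))⁻¹ * ∑ r, x (r, r) else 0)
          = star (x (p, p)) * (((Fintype.card ι : ℂ))⁻¹ * ∑ r, x (r, r)) := by
        intro p
        rw [Finset.sum_eq_single p]
        · simp
        · intro q _ hq; simp [Ne.symm hq]
        · simp
      rw [Finset.sum_congr rfl fun p _ => hp p, ← Finset.sum_mul]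
      simp only [Complex.star_def, map_sum]
      ring
    rw [hdot, ← Complex.normSq_eq_conj_mul_self]
    have hcast : ((Fintype.card ι : ℂ))⁻¹ * (Complex.normSq (∑ r, x (r, r)) : ℂ)
        = (((Fintype.card ι : ℝ))⁻¹ * Complex.normSq (∑ r, x (r, r)) : ℝ) := by
      push_cast; ring
    rw [hcast, Complex.zero_le_real]
    exact mul_nonneg (by positivity) (Complex.normSq_nonneg _)

lemma maxEnt_mul_maxEnt [Nonempty ι] : maxEnt ι * maxEnt ι = maxEnt ι := by
  have hcard : (Fintype.card ι : ℂ) ≠ 0 := by exact_mod_cast Fintype.card_ne_zero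
  ext ⟨p, q⟩ ⟨t, u⟩
  simp only [Matrix.mul_apply, maxEnt, Matrix.of_apply]
  rw [Fintype.sum_prod_type]
  by_cases h1 : p = q <;> by_cases h2 : t = u <;>
    simp [h1, h2, Finset.sum_ite_eq, Finset.card_univ, ite_and, mul_ite]

lemma one_sub_maxEnt_psd [Nonempty ι] : ((1 : Matrix (ι × ι) (ι × ι) ℂ) - maxEnt ι).PosSemidef := by
  have h1 : ((1 : Matrix (ι × ι) (ι × ι) ℂ) - maxEnt ι)ᴴ = 1 - maxEnt ι := by
    rw [Matrix.conjTranspose_sub, Matrix.conjTranspose_one, maxEnt_conjTranspose]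
  have h2 : ((1 : Matrix (ι × ι) (ι × ι) ℂ) - maxEnt ι)ᴴ * (1 - maxEnt ι) = 1 - maxEnt ι := by
    rw [h1, sub_mul, one_mul, mul_sub, mul_one, maxEnt_mul_maxEnt]
    abel
  rw [← h2]
  exact Matrix.posSemidef_conjTranspose_mul_self _

lemma maxEnt_density [Nonempty ι] : IsDensity (maxEnt ι) :=
  ⟨maxEnt_psd ι, maxEnt_trace ι⟩

end MaxEntLemmas

section POVMLemmas

lemma povm_one_sub_psd {ι A X : Type} [Fintype ι] [Fintype A] [DecidableEq ι]
    {E : A → X → HMat ι} (hE : IsPOVM E) (a : A) (x : X) :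
    ((1 : HMat ι) - E a x).PosSemidef := by
  classical
  have h : (1 : HMat ι) - E a x = ∑ a' ∈ Finset.univ.erase a, E a' x := by
    rw [← hE.2 x, ← Finset.add_sum_erase _ _ (Finset.mem_univ a)]
    abel
  rw [h]
  exact sum_psd _ _ fun i _ => hE.1 i x

lemma povm_conj {ι A X : Type} [Fintype ι] [DecidableEq ι] [Fintype A]
    {E : A → X → HMat ι} (hE : IsPOVM E) (V : HMat ι) (hV : Vᴴ * V = 1) :
    IsPOVM (fun a x => Vᴴ * E a x * V) := by
  refine ⟨fun a x => (hE.1 a x).conjTranspose_mul_mul_same V, fun x => ?_⟩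
  have h : ∑ a, Vᴴ * E a x * V = Vᴴ * (∑ a, E a x) * V := by
    rw [Finset.mul_sum, Finset.sum_mul]
  rw [h, hE.2 x, Matrix.mul_one, hV]

lemma map_star_unitary {ι : Type} [Fintype ι] [DecidableEq ι] {M : HMat ι}
    (hM : Mᴴ * M = 1) : (M.map (starRingEnd ℂ))ᴴ * (M.map (starRingEnd ℂ)) = 1 := by
  have key : (M.map (starRingEnd ℂ))ᴴ * (M.map (starRingEnd ℂ))
      = (Mᴴ * M).map (starRingEnd ℂ) := by
    ext i j
    simp only [Matrix.mul_apply, Matrix.conjTranspose_apply, Matrix.map_apply, map_sum]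
    refine Finset.sum_congr rfl fun p _ => ?_
    rw [RingHom.map_mul]
    simp only [Complex.star_def, Complex.conj_conj]
  rw [key, hM]
  ext i j
  simp [Matrix.map_apply, Matrix.one_apply, apply_ite]

lemma det_povm {ι A X : Type} [Fintype ι] [DecidableEq ι] [Fintype A] [DecidableEq A] (a₀ : A) :
    IsPOVM (fun (a : A) (_ : X) => if a = a₀ then (1 : HMat ι) else 0) := by
  constructor
  · intro a x
    by_cases h : a = a₀ <;> simp [h, Matrix.PosSemidef.zero, Matrix.PosSemidef.one]
  · intro x
    simp [Finset.sum_ite_eq]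

end POVMLemmas

section CorrLemmas

variable {ι A B X Y : Type} [Fintype ι] [DecidableEq ι] [Fintype A] [Fintype B]
  [Fintype X] [Fintype Y]

lemma corr_nonneg {ρ : Matrix (ι × ι) (ι × ι) ℂ} (hρ : ρ.PosSemidef)
    {EA : A → X → HMat ι} {EB : B → Y → HMat ι} (hEA : IsPOVM EA) (hEB : IsPOVM EB)
    (a : A) (b : B) (x : X) (y : Y) : 0 ≤ quantumCorr ρ EA EB a b x y :=
  re_nonneg_of_cnonneg (psd_mul_trace_nonneg hρ (kron_psd (hEA.1 a x) (hEB.1 b y)))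

lemma one_sub_kron_psd {EA : A → X → HMat ι} {EB : B → Y → HMat ι}
    (hEA : IsPOVM EA) (hEB : IsPOVM EB) (a : A) (b : B) (x : X) (y : Y) :
    ((1 : Matrix (ι × ι) (ι × ι) ℂ) - EA a x ⊗ₖ EB b y).PosSemidef := by
  have hiden : (1 : Matrix (ι × ι) (ι × ι) ℂ) - EA a x ⊗ₖ EB b y
      = ((1 : HMat ι) - EA a x) ⊗ₖ EB b y + (1 : HMat ι) ⊗ₖ ((1 : HMat ι) - EB b y) := by
    ext ⟨i, j⟩ ⟨k, l⟩
    simp only [Matrix.sub_apply, Matrix.add_apply, Matrix.kroneckerMap_apply,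
      Matrix.one_apply, Prod.mk.injEq]
    by_cases h1 : i = k <;> by_cases h2 : j = l <;> simp [h1, h2] <;> ring
  rw [hiden]
  exact (kron_psd (povm_one_sub_psd hEA a x) (hEB.1 b y)).add
    (kron_psd Matrix.PosSemidef.one (povm_one_sub_psd hEB b y))

lemma corr_le_one {ρ : Matrix (ι × ι) (ι × ι) ℂ} (hρ : IsDensity ρ)
    {EA : A → X → HMat ι} {EB : B → Y → HMat ι} (hEA : IsPOVM EA) (hEB : IsPOVM EB)
    (a : A) (b : B) (x : X) (y : Y) : quantumCorr ρ EA EB a b x y ≤ 1 := by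
  have h0 := re_nonneg_of_cnonneg
    (psd_mul_trace_nonneg hρ.1 (one_sub_kron_psd hEA hEB a b x y))
  have hlin : (ρ * ((1 : Matrix (ι × ι) (ι × ι) ℂ) - EA a x ⊗ₖ EB b y)).trace
      = 1 - (ρ * (EA a x ⊗ₖ EB b y)).trace := by
    rw [Matrix.mul_sub, Matrix.mul_one, Matrix.trace_sub, hρ.2]
  rw [hlin] at h0
  simp only [Complex.sub_re, Complex.one_re] at h0
  unfold quantumCorr
  linarith

end CorrLemmas

section LHVLemmas

variable {A B X Y : Type} [Fintype A] [Fintype B] [Fintype X] [Fintype Y]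

lemma lhv_entry_nonneg {P : A → B → X → Y → ℝ} (hP : IsLHV P) (a : A) (b : B) (x : X) (y : Y) :
    0 ≤ P a b x y := by
  obtain ⟨n, w, pA, pB, hw0, hw1, hA0, hA1, hB0, hB1, hPeq⟩ := hP
  rw [hPeq]
  exact Finset.sum_nonneg fun l _ => mul_nonneg (mul_nonneg (hw0 l) (hA0 a x l)) (hB0 b y l)

lemma lhv_entry_le_one {P : A → B → X → Y → ℝ} (hP : IsLHV P) (a : A) (b : B) (x : X) (y : Y) :
    P a b x y ≤ 1 := by
  obtain ⟨n, w, pA, pB, hw0, hw1, hA0, hA1, hB0, hB1, hPeq⟩ := hP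
  rw [hPeq, ← hw1]
  refine Finset.sum_le_sum fun l _ => ?_
  have hA' : pA a x l ≤ 1 := by
    rw [← hA1 x l]
    exact Finset.single_le_sum (fun a' _ => hA0 a' x l) (Finset.mem_univ a)
  have hB' : pB b y l ≤ 1 := by
    rw [← hB1 y l]
    exact Finset.single_le_sum (fun b' _ => hB0 b' y l) (Finset.mem_univ b)
  calc w l * pA a x l * pB b y l ≤ w l * 1 * 1 := by
        apply mul_le_mul (mul_le_mul le_rfl hA' (hA0 a x l) (hw0 l)) hB' (hB0 b y l)
        exact mul_nonneg (hw0 l) zero_le_one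
    _ = w l := by ring

lemma bellValue_le_of_entries (Bf : A → B → X → Y → ℝ) (hBf : ∀ a b x y, 0 ≤ Bf a b x y)
    {P : A → B → X → Y → ℝ} (hP1 : ∀ a b x y, P a b x y ≤ 1) :
    bellValue Bf P ≤ ∑ x, ∑ y, ∑ a, ∑ b, Bf a b x y := by
  unfold bellValue
  refine Finset.sum_le_sum fun x _ => Finset.sum_le_sum fun y _ =>
    Finset.sum_le_sum fun a _ => Finset.sum_le_sum fun b _ => ?_
  exact mul_le_of_le_one_right (hBf a b x y) (hP1 a b x y)

lemma lhv_bellValue_le_localBound (Bf : A → B → X → Y → ℝ)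
    (hBf : ∀ a b x y, 0 ≤ Bf a b x y) {P : A → B → X → Y → ℝ} (hP : IsLHV P) :
    bellValue Bf P ≤ localBound Bf := by
  apply le_csSup
  · refine ⟨∑ x, ∑ y, ∑ a, ∑ b, Bf a b x y, ?_⟩
    rintro r ⟨Q, hQ, rfl⟩
    exact bellValue_le_of_entries Bf hBf fun a b x y => lhv_entry_le_one hQ a b x y
  · exact ⟨P, hP, rfl⟩

lemma exists_pos_coeff (Bf : A → B → X → Y → ℝ) (hBf : ∀ a b x y, 0 ≤ Bf a b x y)
    (hω : 0 < localBound Bf) : ∃ a b x y, 0 < Bf a b x y := by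
  by_contra hc
  push_neg at hc
  have hz : ∀ a b x y, Bf a b x y = 0 := fun a b x y =>
    le_antisymm (hc a b x y) (hBf a b x y)
  have : localBound Bf ≤ 0 := by
    apply Real.sSup_le _ le_rfl
    rintro r ⟨P, hP, rfl⟩
    simp [bellValue, hz]
  linarith

end LHVLemmas

section TraceLemmas

lemma bell_trace {A B X Y ι : Type} [Fintype A] [Fintype B] [Fintype X] [Fintype Y]
    [Fintype ι] [DecidableEq ι]
    (Bf : A → B → X → Y → ℝ) (ρ : Matrix (ι × ι) (ι × ι) ℂ)
    (EA : A → X → HMat ι) (EB : B → Y → HMat ι) :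
    bellValue Bf (quantumCorr ρ EA EB)
      = ((ρ * ∑ x, ∑ y, ∑ a, ∑ b, ((Bf a b x y : ℝ) : ℂ) • (EA a x ⊗ₖ EB b y)).trace).re := by
  simp only [bellValue, quantumCorr, Finset.mul_sum, Matrix.mul_smul, Matrix.trace_sum,
    Matrix.trace_smul, Complex.re_sum, smul_eq_mul, Complex.mul_re, Complex.ofReal_re,
    Complex.ofReal_im, zero_mul, sub_zero]

lemma kron_sandwich {m n : Type} [Fintype m] [Fintype n]
    (M₁ : Matrix m m ℂ) (M₂ : Matrix n n ℂ) (A : Matrix m m ℂ) (B : Matrix n n ℂ) :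
    (M₁ᴴ * A * M₁) ⊗ₖ (M₂ᴴ * B * M₂) = (M₁ ⊗ₖ M₂)ᴴ * (A ⊗ₖ B) * (M₁ ⊗ₖ M₂) := by
  rw [kron_conjTranspose, ← Matrix.mul_kronecker_mul, ← Matrix.mul_kronecker_mul]

lemma maxEnt_mul_entry {ι : Type} [Fintype ι] [DecidableEq ι]
    (M : Matrix (ι × ι) (ι × ι) ℂ) (p q t u : ι) :
    (maxEnt ι * M) (p, q) (t, u)
      = if p = q then ((Fintype.card ι : ℂ))⁻¹ * ∑ r, M (r, r) (t, u) else 0 := by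
  rw [Matrix.mul_apply, Fintype.sum_prod_type]
  by_cases h : p = q
  · simp [h, maxEnt, ite_and, ite_mul, Finset.sum_ite_eq, Finset.mul_sum]
  · simp [h, maxEnt]

lemma mul_maxEnt_entry {ι : Type} [Fintype ι] [DecidableEq ι]
    (N : Matrix (ι × ι) (ι × ι) ℂ) (p q t u : ι) :
    (N * maxEnt ι) (p, q) (t, u)
      = if t = u then ((Fintype.card ι : ℂ))⁻¹ * ∑ r, N (p, q) (r, r) else 0 := by
  rw [Matrix.mul_apply, Fintype.sum_prod_type]
  by_cases h : t = u
  · simp [h, maxEnt, ite_and, mul_ite, Finset.sum_ite_eq, Finset.mul_sum, mul_comm]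
  · simp [h, maxEnt]

lemma maxEnt_mul_trace {ι : Type} [Fintype ι] [DecidableEq ι]
    (M : Matrix (ι × ι) (ι × ι) ℂ) :
    (maxEnt ι * M).trace = ((Fintype.card ι : ℂ))⁻¹ * ∑ p, ∑ r, M (r, r) (p, p) := by
  rw [Matrix.trace]
  have : ∀ pq : ι × ι, (maxEnt ι * M).diag pq
      = if pq.1 = pq.2 then ((Fintype.card ι : ℂ))⁻¹ * ∑ r, M (r, r) (pq.1, pq.2) else 0 := by
    rintro ⟨p, q⟩
    exact maxEnt_mul_entry M p q p q
  rw [Finset.sum_congr rfl fun pq _ => this pq, Fintype.sum_prod_type]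
  simp [Finset.sum_ite_eq, Finset.mul_sum]

end TraceLemmas

section Weyl

variable (d : ℕ) [NeZero d]

noncomputable def zeta : ℂ := Complex.exp (2 * Real.pi * Complex.I / d)

lemma zeta_prim : IsPrimitiveRoot (zeta d) d :=
  Complex.isPrimitiveRoot_exp d (NeZero.ne d)

lemma zeta_pow_d : zeta d ^ d = 1 := (zeta_prim d).pow_eq_one

lemma zeta_ne_zero : zeta d ≠ 0 := Complex.exp_ne_zero _

lemma conj_zeta_pow (m : ℕ) : (starRingEnd ℂ) (zeta d ^ m) = (zeta d ^ m)⁻¹ := by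
  have habs : Complex.normSq (zeta d) = 1 := by
    have h1 : 2 * (Real.pi : ℂ) * Complex.I / d = (((2 * Real.pi / d : ℝ)) : ℂ) * Complex.I := by
      push_cast; ring
    rw [← Complex.sq_norm]
    unfold zeta
    rw [h1, Complex.norm_exp_ofReal_mul_I]
    norm_num
  have hmul : zeta d ^ m * (starRingEnd ℂ) (zeta d ^ m) = 1 := by
    rw [Complex.mul_conj, map_pow, habs]
    simp
  exact (eq_inv_of_mul_eq_one_left (by rw [mul_comm] at hmul; exact hmul)).symm ▸ rfl

lemma charSum (p q : Fin d) :
    ∑ k : Fin d, (starRingEnd ℂ) (zeta d ^ ((k : ℕ) * (p : ℕ))) * zeta d ^ ((k : ℕ) * (q : ℕ))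
      = if p = q then (d : ℂ) else 0 := by
  have hterm : ∀ k : Fin d,
      (starRingEnd ℂ) (zeta d ^ ((k : ℕ) * (p : ℕ))) * zeta d ^ ((k : ℕ) * (q : ℕ))
        = (((zeta d ^ (p : ℕ))⁻¹ * zeta d ^ (q : ℕ)) : ℂ) ^ (k : ℕ) := by
    intro k
    rw [conj_zeta_pow, mul_pow, inv_pow, ← pow_mul, ← pow_mul,
      mul_comm (p : ℕ) (k : ℕ), mul_comm (q : ℕ) (k : ℕ)]
  rw [Finset.sum_congr rfl fun k _ => hterm k]
  rw [Fin.sum_univ_eq_sum_range (fun k => (((zeta d ^ (p : ℕ))⁻¹ * zeta d ^ (q : ℕ)) : ℂ) ^ k) d]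
  by_cases hpq : p = q
  · subst hpq
    simp [inv_mul_cancel₀ (pow_ne_zero _ (zeta_ne_zero d))]
  · have hx1 : ((zeta d ^ (p : ℕ))⁻¹ * zeta d ^ (q : ℕ) : ℂ) ≠ 1 := by
      intro hx
      apply hpq
      rw [inv_mul_eq_one₀ (pow_ne_zero _ (zeta_ne_zero d))] at hx
      exact (Fin.ext ((zeta_prim d).pow_inj p.isLt q.isLt hx))
    have hxd : (((zeta d ^ (p : ℕ))⁻¹ * zeta d ^ (q : ℕ)) : ℂ) ^ d = 1 := by
      rw [mul_pow, inv_pow, ← pow_mul, ← pow_mul, mul_comm (p : ℕ) d, mul_comm (q : ℕ) d,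
        pow_mul, pow_mul, zeta_pow_d, one_pow, one_pow]
      simp
    rw [geom_sum_eq hx1, hxd]
    simp [hpq]

noncomputable def Vm (j k : Fin d) : HMat (Fin d) :=
  Matrix.of fun p q => if p = q + j then zeta d ^ ((k : ℕ) * (q : ℕ)) else 0

lemma Vm_unitary (j k : Fin d) : (Vm d j k)ᴴ * Vm d j k = 1 := by
  ext q q'
  simp only [Matrix.mul_apply, Matrix.conjTranspose_apply, Vm, Matrix.of_apply]
  by_cases h : q = q'
  · subst h
    rw [Finset.sum_eq_single (q + j)]
    · rw [if_pos rfl, Matrix.one_apply_eq, Complex.star_def, conj_zeta_pow,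
        inv_mul_cancel₀ (pow_ne_zero _ (zeta_ne_zero d))]
    · intro p _ hp
      simp [if_neg hp]
    · simp
  · rw [Finset.sum_eq_zero, Matrix.one_apply_ne h]
    intro p _
    by_cases hp : p = q + j
    · have hp' : p ≠ q' + j := by
        rw [hp]
        intro hc
        exact h (add_right_cancel hc)
      simp [if_neg hp']
    · simp [if_neg hp]

noncomputable def fPh (k : Fin d) : Fin d × Fin d → ℂ :=
  fun rs => zeta d ^ ((k : ℕ) * (rs.1 : ℕ)) * (starRingEnd ℂ) (zeta d ^ ((k : ℕ) * (rs.2 : ℕ)))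

lemma fPh_diag (k r : Fin d) : fPh d k (r, r) = 1 := by
  unfold fPh
  rw [conj_zeta_pow, mul_inv_cancel₀ (pow_ne_zero _ (zeta_ne_zero d))]

noncomputable def gw (j k : Fin d) : Matrix (Fin d × Fin d) (Fin d × Fin d) ℂ :=
  Vm d j k ⊗ₖ (Vm d j k).map (starRingEnd ℂ)

lemma gw_apply (j k : Fin d) (p q r s : Fin d) :
    gw d j k (p, q) (r, s) = if (p, q) = (r + j, s + j) then fPh d k (r, s) else 0 := by
  simp only [gw, Matrix.kroneckerMap_apply, Vm, Matrix.map_apply, Matrix.of_apply, fPh,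
    Prod.mk.injEq, apply_ite, map_zero]
  by_cases h1 : p = r + j <;> by_cases h2 : q = s + j <;> simp [h1, h2]

lemma gw_sandwich (M : Matrix (Fin d × Fin d) (Fin d × Fin d) ℂ) (j k : Fin d)
    (p q r s : Fin d) :
    ((gw d j k)ᴴ * M * gw d j k) (p, q) (r, s)
      = (starRingEnd ℂ) (fPh d k (p, q)) * M (p + j, q + j) (r + j, s + j) * fPh d k (r, s) := by
  rw [Matrix.mul_assoc, Matrix.mul_apply]
  have hterm : ∀ mn : Fin d × Fin d,
      (gw d j k)ᴴ (p, q) mn * (M * gw d j k) mn (r, s)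
        = if mn = (p + j, q + j) then
            (starRingEnd ℂ) (fPh d k (p, q)) * (M * gw d j k) mn (r, s) else 0 := by
    rintro ⟨m, n⟩
    rw [Matrix.conjTranspose_apply, gw_apply]
    by_cases h : (m, n) = (p + j, q + j) <;> simp [h, Complex.star_def]
  rw [Finset.sum_congr rfl fun mn _ => hterm mn, Finset.sum_ite_eq' Finset.univ]
  simp only [Finset.mem_univ, if_true]
  have hin : (M * gw d j k) (p + j, q + j) (r, s)
      = M (p + j, q + j) (r + j, s + j) * fPh d k (r, s) := by
    rw [Matrix.mul_apply]
    have hterm2 : ∀ mn : Fin d × Fin d,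
        M (p + j, q + j) mn * gw d j k mn (r, s)
          = if mn = (r + j, s + j) then M (p + j, q + j) mn * fPh d k (r, s) else 0 := by
      rintro ⟨m, n⟩
      rw [gw_apply]
      by_cases h : (m, n) = (r + j, s + j) <;> simp [h]
    rw [Finset.sum_congr rfl fun mn _ => hterm2 mn, Finset.sum_ite_eq' Finset.univ]
    simp
  rw [hin]
  ring

lemma twirl_col_sum (M : Matrix (Fin d × Fin d) (Fin d × Fin d) ℂ) (p q : Fin d) :
    ∑ r : Fin d, (∑ j : Fin d, ∑ k : Fin d, (gw d j k)ᴴ * M * gw d j k) (p, q) (r, r)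
      = if p = q then (d : ℂ) * ∑ p' : Fin d, ∑ r' : Fin d, M (p', p') (r', r') else 0 := by
  have hentry : ∀ r : Fin d,
      (∑ j : Fin d, ∑ k : Fin d, (gw d j k)ᴴ * M * gw d j k) (p, q) (r, r)
        = ∑ j : Fin d, ∑ k : Fin d,
            ((starRingEnd ℂ) (zeta d ^ ((k : ℕ) * (p : ℕ))) * zeta d ^ ((k : ℕ) * (q : ℕ)))
              * M (p + j, q + j) (r + j, r + j) := by
    intro r
    rw [Matrix.sum_apply]
    refine Finset.sum_congr rfl fun j _ => ?_
    rw [Matrix.sum_apply]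
    refine Finset.sum_congr rfl fun k _ => ?_
    rw [gw_sandwich, fPh_diag, mul_one]
    unfold fPh
    rw [RingHom.map_mul (starRingEnd ℂ), Complex.conj_conj]
  rw [Finset.sum_congr rfl fun r _ => hentry r]
  rw [Finset.sum_comm]
  have hfact : ∀ j : Fin d,
      ∑ r : Fin d, ∑ k : Fin d,
          ((starRingEnd ℂ) (zeta d ^ ((k : ℕ) * (p : ℕ))) * zeta d ^ ((k : ℕ) * (q : ℕ)))
            * M (p + j, q + j) (r + j, r + j)
        = (if p = q then (d : ℂ) else 0) * ∑ r : Fin d, M (p + j, q + j) (r + j, r + j) := by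
    intro j
    rw [Finset.mul_sum]
    refine Finset.sum_congr rfl fun r _ => ?_
    rw [← Finset.sum_mul, charSum]
  rw [Finset.sum_congr rfl fun j _ => hfact j]
  by_cases hpq : p = q
  · subst hpq
    simp only [if_pos rfl]
    rw [← Finset.mul_sum]
    congr 1
    have hinner : ∀ j : Fin d,
        ∑ r : Fin d, M (p + j, p + j) (r + j, r + j)
          = ∑ r' : Fin d, M (p + j, p + j) (r', r') :=
      fun j => Fintype.sum_equiv (Equiv.addRight j)
        (fun r => M (p + j, p + j) (r + j, r + j))
        (fun r' => M (p + j, p + j) (r', r')) (fun r => rfl)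
    rw [Finset.sum_congr rfl fun j _ => hinner j]
    exact Fintype.sum_equiv (Equiv.addLeft p)
      (fun j => ∑ r' : Fin d, M (p + j, p + j) (r', r'))
      (fun p' => ∑ r' : Fin d, M (p', p') (r', r')) (fun j => rfl)
  · simp [hpq]

lemma twirl_mul_maxEnt (M : Matrix (Fin d × Fin d) (Fin d × Fin d) ℂ) :
    (∑ j : Fin d, ∑ k : Fin d, (gw d j k)ᴴ * M * gw d j k) * maxEnt (Fin d)
      = ((d : ℂ) * ∑ p : Fin d, ∑ r : Fin d, M (p, p) (r, r)) • maxEnt (Fin d) := by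
  have hcard : (Fintype.card (Fin d) : ℂ) = (d : ℂ) := by simp
  ext ⟨p, q⟩ ⟨t, u⟩
  rw [mul_maxEnt_entry, twirl_col_sum]
  simp only [Matrix.smul_apply, maxEnt, Matrix.of_apply, smul_eq_mul, hcard]
  by_cases h1 : p = q <;> by_cases h2 : t = u <;> simp [h1, h2] <;> ring

end Weyl

end Stmt17Aux

lemma conj_density {n : Type} [Fintype n] [DecidableEq n] {ρ : Matrix n n ℂ}
    (hρ : IsDensity ρ) {Q : Matrix n n ℂ} (hQ : Qᴴ * Q = 1) : IsDensity (Q * ρ * Qᴴ) := by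
  refine ⟨hρ.1.mul_mul_conjTranspose_same Q, ?_⟩
  rw [Matrix.trace_mul_comm, ← Matrix.mul_assoc, hQ, Matrix.one_mul, hρ.2]

lemma kron_one_unitary {n : Type} [Fintype n] [DecidableEq n] {U : Matrix n n ℂ}
    (hU : U ∈ Matrix.unitaryGroup n ℂ) :
    (U ⊗ₖ (1 : Matrix n n ℂ))ᴴ * (U ⊗ₖ (1 : Matrix n n ℂ)) = 1 := by
  rw [kron_conjTranspose, Matrix.conjTranspose_one, ← Matrix.mul_kronecker_mul,
    Matrix.one_mul]
  have hUU : Uᴴ * U = 1 := by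
    rw [← Matrix.star_eq_conjTranspose]
    exact (Unitary.mem_iff.mp hU).1
  rw [hUU, Matrix.one_kronecker_one]

lemma trace_conj_comm {n : Type} [Fintype n] (ρ M Q : Matrix n n ℂ) :
    (ρ * (Qᴴ * M * Q)).trace = ((Q * ρ * Qᴴ) * M).trace := by
  have h1 : ρ * (Qᴴ * M * Q) = (ρ * (Qᴴ * M)) * Q := by
    noncomm_ring
  rw [h1, Matrix.trace_mul_comm]
  congr 1
  simp only [Matrix.mul_assoc]

set_option maxHeartbeats 2000000 in
/-- Theorem 5, sufficient condition for Bell nonlocality: if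
`F(ρ) > 1 / LV(|Ψ_d⁺⟩⟨Ψ_d⁺|, B)` then `ρ` violates the Bell inequality specified by `B`:
some local POVMs give a quantum correlation with `Γ(P, B) > 1`, which is in particular
not Bell-local. -/
theorem stmt17 {A B X Y : Type} [Fintype A] [Fintype B] [Fintype X] [Fintype Y]
    [Nonempty A] [Nonempty B] [Nonempty X] [Nonempty Y]
    (d : ℕ) (hd : 0 < d)
    (ρ : Matrix (Fin d × Fin d) (Fin d × Fin d) ℂ) (hρ : IsDensity ρ)
    (Bf : A → B → X → Y → ℝ) (hBf : ∀ a b x y, 0 ≤ Bf a b x y)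
    (hω : 0 < localBound Bf)
    (h : fef ρ > 1 / LV (maxEnt (Fin d)) Bf) :
    ∃ (EA : A → X → HMat (Fin d)) (EB : B → Y → HMat (Fin d)),
      IsPOVM EA ∧ IsPOVM EB ∧
      nonlocalityFraction (quantumCorr ρ EA EB) Bf > 1 ∧
      ¬ IsLHV (quantumCorr ρ EA EB) := by
  classical
  haveI : NeZero d := ⟨hd.ne'⟩
  haveI : Nonempty (Fin d) := ⟨⟨0, hd⟩⟩
  obtain ⟨a₀, b₀, x₀, y₀, hBpos⟩ := exists_pos_coeff Bf hBf hω
  -- the LV set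
  set LVset : Set ℝ := {r : ℝ | ∃ (EA : A → X → HMat (Fin d)) (EB : B → Y → HMat (Fin d)),
    IsPOVM EA ∧ IsPOVM EB ∧
    r = nonlocalityFraction (quantumCorr (maxEnt (Fin d)) EA EB) Bf} with hLVset
  have hLVeq : LV (maxEnt (Fin d)) Bf = sSup LVset := rfl
  -- LV set is bounded above
  have hbddLV : BddAbove LVset := by
    refine ⟨(∑ x, ∑ y, ∑ a, ∑ b, Bf a b x y) / localBound Bf, ?_⟩
    rintro r ⟨EA, EB, hEA, hEB, rfl⟩
    unfold nonlocalityFraction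
    exact (div_le_div_iff_of_pos_right hω).mpr (bellValue_le_of_entries Bf hBf
      fun a b x y => corr_le_one (maxEnt_density (Fin d)) hEA hEB a b x y)
  -- deterministic POVMs give a positive element of LVset
  set EA₀ : A → X → HMat (Fin d) := fun a _ => if a = a₀ then (1 : HMat (Fin d)) else 0 with hEA₀def
  set EB₀ : B → Y → HMat (Fin d) := fun b _ => if b = b₀ then (1 : HMat (Fin d)) else 0 with hEB₀def
  have hEA₀ : IsPOVM EA₀ := det_povm a₀
  have hEB₀ : IsPOVM EB₀ := det_povm b₀
  have hP₀ : quantumCorr (maxEnt (Fin d)) EA₀ EB₀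
      = fun a b _ _ => if a = a₀ then (if b = b₀ then (1 : ℝ) else 0) else 0 := by
    funext a b x y
    unfold quantumCorr
    by_cases ha : a = a₀ <;> by_cases hb : b = b₀ <;>
      simp [hEA₀def, hEB₀def, ha, hb, Matrix.one_kronecker_one, Matrix.zero_kronecker,
        Matrix.kronecker_zero, maxEnt_trace]
  have hbell₀ : bellValue Bf (quantumCorr (maxEnt (Fin d)) EA₀ EB₀)
      = ∑ x, ∑ y, Bf a₀ b₀ x y := by
    rw [hP₀]
    unfold bellValue
    refine Finset.sum_congr rfl fun x _ => Finset.sum_congr rfl fun y _ => ?_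
    simp [mul_ite, Finset.sum_ite_eq']
  have hbell₀pos : 0 < bellValue Bf (quantumCorr (maxEnt (Fin d)) EA₀ EB₀) := by
    rw [hbell₀]
    have h1 : Bf a₀ b₀ x₀ y₀ ≤ ∑ y, Bf a₀ b₀ x₀ y :=
      Finset.single_le_sum (fun y _ => hBf a₀ b₀ x₀ y) (Finset.mem_univ y₀)
    have h2 : (∑ y, Bf a₀ b₀ x₀ y) ≤ ∑ x, ∑ y, Bf a₀ b₀ x y :=
      Finset.single_le_sum (fun x _ => Finset.sum_nonneg fun y _ => hBf a₀ b₀ x y)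
        (Finset.mem_univ x₀)
    linarith
  have hLVmem : nonlocalityFraction (quantumCorr (maxEnt (Fin d)) EA₀ EB₀) Bf ∈ LVset :=
    ⟨EA₀, EB₀, hEA₀, hEB₀, rfl⟩
  have hLVpos : 0 < LV (maxEnt (Fin d)) Bf := by
    rw [hLVeq]
    refine lt_of_lt_of_le ?_ (le_csSup hbddLV hLVmem)
    exact div_pos hbell₀pos hω
  -- fef set facts
  set Sf : Set ℝ := {r : ℝ | ∃ U : Matrix (Fin d) (Fin d) ℂ, U ∈ Matrix.unitaryGroup (Fin d) ℂ ∧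
    r = ((maxEnt (Fin d) * ((U ⊗ₖ (1 : HMat (Fin d))) * ρ *
      ((U ⊗ₖ (1 : HMat (Fin d)))ᴴ))).trace).re} with hSfdef
  have hfefeq : fef ρ = sSup Sf := rfl
  have hdens : ∀ U : Matrix (Fin d) (Fin d) ℂ, U ∈ Matrix.unitaryGroup (Fin d) ℂ →
      IsDensity ((U ⊗ₖ (1 : HMat (Fin d))) * ρ * ((U ⊗ₖ (1 : HMat (Fin d)))ᴴ)) :=
    fun U hU => conj_density hρ (kron_one_unitary hU)
  have hfefbdd : BddAbove Sf := by
    refine ⟨1, ?_⟩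
    rintro r ⟨U, hU, rfl⟩
    set ρ'' := (U ⊗ₖ (1 : HMat (Fin d))) * ρ * ((U ⊗ₖ (1 : HMat (Fin d)))ᴴ)
    have hρ'' := hdens U hU
    have h0 := re_nonneg_of_cnonneg
      (psd_mul_trace_nonneg (one_sub_maxEnt_psd (Fin d)) hρ''.1)
    have hlin : (((1 : Matrix (Fin d × Fin d) (Fin d × Fin d) ℂ) - maxEnt (Fin d)) * ρ'').trace
        = 1 - (maxEnt (Fin d) * ρ'').trace := by
      rw [Matrix.sub_mul, Matrix.one_mul, Matrix.trace_sub, hρ''.2]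
    rw [hlin] at h0
    simp only [Complex.sub_re, Complex.one_re] at h0
    linarith
  have hfefne : Sf.Nonempty := by
    refine ⟨_, 1, one_mem _, rfl⟩
  obtain ⟨rU, ⟨U, hU, hrUeq⟩, hrU⟩ := (lt_csSup_iff hfefbdd hfefne).mp (hfefeq ▸ h)
  set ρ'' := (U ⊗ₖ (1 : HMat (Fin d))) * ρ * ((U ⊗ₖ (1 : HMat (Fin d)))ᴴ) with hρ''def
  have hρ''d : IsDensity ρ'' := hdens U hU
  have hrpos : 0 < rU := lt_trans (by positivity) hrU
  have hLVr : 1 / rU < LV (maxEnt (Fin d)) Bf := by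
    rw [div_lt_iff₀ hrpos]
    rw [div_lt_iff₀ hLVpos] at hrU
    linarith [mul_comm rU (LV (maxEnt (Fin d)) Bf)]
  obtain ⟨γ, ⟨EA, EB, hEA, hEB, hγeq⟩, hγ⟩ :=
    (lt_csSup_iff hbddLV ⟨_, hLVmem⟩).mp (hLVeq ▸ hLVr)
  have hcross : localBound Bf < bellValue Bf (quantumCorr (maxEnt (Fin d)) EA EB) * rU := by
    rw [hγeq] at hγ
    unfold nonlocalityFraction at hγ
    rw [div_lt_div_iff₀ hrpos hω] at hγ
    linarith
  -- the Bell operator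
  set W : Matrix (Fin d × Fin d) (Fin d × Fin d) ℂ :=
    ∑ x, ∑ y, ∑ a, ∑ b, ((Bf a b x y : ℝ) : ℂ) • (EA a x ⊗ₖ EB b y) with hWdef
  have hWpsd : W.PosSemidef :=
    sum_psd _ _ fun x _ => sum_psd _ _ fun y _ => sum_psd _ _ fun a _ =>
      sum_psd _ _ fun b _ => smul_psd (kron_psd (hEA.1 a x) (hEB.1 b y)) (hBf a b x y)
  have hbell_eq : bellValue Bf (quantumCorr (maxEnt (Fin d)) EA EB)
      = ((maxEnt (Fin d) * W).trace).re := bell_trace Bf (maxEnt (Fin d)) EA EB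
  have ht : 0 ≤ (maxEnt (Fin d) * W).trace := psd_mul_trace_nonneg (maxEnt_psd _) hWpsd
  have ht_im : ((maxEnt (Fin d) * W).trace).im = 0 := im_zero_of_cnonneg ht
  -- twirled Bell operator
  set Wtw : Matrix (Fin d × Fin d) (Fin d × Fin d) ℂ :=
    ∑ j : Fin d, ∑ k : Fin d, (gw d j k)ᴴ * W * gw d j k with hWtwdef
  set c : ℂ := (d : ℂ) * ∑ p : Fin d, ∑ r : Fin d, W (p, p) (r, r) with hcdef
  have hWtwΨ : Wtw * maxEnt (Fin d) = c • maxEnt (Fin d) := twirl_mul_maxEnt d W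
  have hWtwpsd : Wtw.PosSemidef :=
    sum_psd _ _ fun j _ => sum_psd _ _ fun k _ => hWpsd.conjTranspose_mul_mul_same _
  have hc2 : c = (d : ℂ) * (d : ℂ) * (maxEnt (Fin d) * W).trace := by
    rw [hcdef, maxEnt_mul_trace]
    have hcd : (Fintype.card (Fin d) : ℂ) = (d : ℂ) := by simp
    have hdne : (d : ℂ) ≠ 0 := by exact_mod_cast hd.ne'
    have hswap : (∑ p : Fin d, ∑ r : Fin d, W (r, r) (p, p))
        = ∑ p : Fin d, ∑ r : Fin d, W (p, p) (r, r) := Finset.sum_comm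
    rw [hcd, hswap]
    field_simp
  have hc_im : c.im = 0 := by
    rw [hc2]
    simp [Complex.mul_im, ht_im]
  have hc_re : c.re = (d : ℝ) * (d : ℝ) * ((maxEnt (Fin d) * W).trace).re := by
    rw [hc2]
    simp [Complex.mul_re, ht_im]
  have hΨWtw : maxEnt (Fin d) * Wtw = c • maxEnt (Fin d) := by
    have h1 := congrArg Matrix.conjTranspose hWtwΨ
    rw [Matrix.conjTranspose_mul, maxEnt_conjTranspose, hWtwpsd.1,
      Matrix.conjTranspose_smul, maxEnt_conjTranspose] at h1
    rwa [show star c = c by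
      rw [Complex.star_def, Complex.conj_eq_iff_im]; exact hc_im] at h1
  -- decomposition Wtw = c • Ψ + (1-Ψ)ᴴ Wtw (1-Ψ)
  set P1 : Matrix (Fin d × Fin d) (Fin d × Fin d) ℂ :=
    (1 : Matrix (Fin d × Fin d) (Fin d × Fin d) ℂ) - maxEnt (Fin d) with hP1def
  have hP1H : P1ᴴ = P1 := by
    rw [hP1def, Matrix.conjTranspose_sub, Matrix.conjTranspose_one, maxEnt_conjTranspose]
  have hsandpsd : (P1ᴴ * Wtw * P1).PosSemidef := hWtwpsd.conjTranspose_mul_mul_same P1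
  have hdecomp : Wtw = c • maxEnt (Fin d) + P1ᴴ * Wtw * P1 := by
    have e1 : P1 * Wtw = Wtw - c • maxEnt (Fin d) := by
      rw [hP1def, Matrix.sub_mul, Matrix.one_mul, hΨWtw]
    have e2 : P1ᴴ * Wtw * P1 = Wtw - c • maxEnt (Fin d) := by
      rw [hP1H, e1, hP1def, Matrix.mul_sub, Matrix.mul_one, Matrix.sub_mul, hWtwΨ,
        smul_mul_assoc, maxEnt_mul_maxEnt]
      abel
    rw [e2]
    abel
  -- main inequality : c.re * rU ≤ Re tr(ρ'' * Wtw)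
  have htΨρ : 0 ≤ (maxEnt (Fin d) * ρ'').trace :=
    psd_mul_trace_nonneg (maxEnt_psd _) hρ''d.1
  have htΨρ_im : ((maxEnt (Fin d) * ρ'').trace).im = 0 := im_zero_of_cnonneg htΨρ
  have hterm1 : ((ρ'' * (c • maxEnt (Fin d))).trace).re = c.re * rU := by
    rw [Matrix.mul_smul, Matrix.trace_smul, smul_eq_mul, Complex.mul_re,
      Matrix.trace_mul_comm, hc_im, htΨρ_im, ← hrUeq]
    ring
  have hterm2 : 0 ≤ ((ρ'' * (P1ᴴ * Wtw * P1)).trace).re :=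
    re_nonneg_of_cnonneg (psd_mul_trace_nonneg hρ''d.1 hsandpsd)
  have hmain : c.re * rU ≤ ((ρ'' * Wtw).trace).re := by
    conv_rhs => rw [hdecomp]
    rw [Matrix.mul_add, Matrix.trace_add]
    simp only [Complex.add_re]
    rw [hterm1]
    linarith
  -- c.re * rU > d * d * ω
  have hcrU : (d : ℝ) * (d : ℝ) * localBound Bf < c.re * rU := by
    rw [hc_re, ← hbell_eq]
    have hd' : (0 : ℝ) < (d : ℝ) := by exact_mod_cast hd
    have := mul_lt_mul_of_pos_left hcross (by positivity : (0:ℝ) < (d:ℝ) * (d:ℝ))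
    linarith [this]
  -- split the trace over the Weyl group
  have hsplit : ((ρ'' * Wtw).trace).re
      = ∑ jk : Fin d × Fin d,
          ((ρ'' * ((gw d jk.1 jk.2)ᴴ * W * gw d jk.1 jk.2)).trace).re := by
    rw [hWtwdef]
    simp only [Finset.mul_sum, Matrix.trace_sum, Complex.re_sum]
    rw [Fintype.sum_prod_type]
  have hexists : ∃ jk : Fin d × Fin d,
      localBound Bf < ((ρ'' * ((gw d jk.1 jk.2)ᴴ * W * gw d jk.1 jk.2)).trace).re := by
    by_contra hc'
    push_neg at hc'
    have hsum_le : ∑ jk : Fin d × Fin d,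
        ((ρ'' * ((gw d jk.1 jk.2)ᴴ * W * gw d jk.1 jk.2)).trace).re
        ≤ ∑ _jk : Fin d × Fin d, localBound Bf :=
      Finset.sum_le_sum fun jk _ => hc' jk
    rw [Finset.sum_const, Finset.card_univ, Fintype.card_prod, Fintype.card_fin,
      nsmul_eq_mul] at hsum_le
    push_cast at hsum_le
    rw [← hsplit] at hsum_le
    nlinarith
  obtain ⟨⟨j, k⟩, hjk⟩ := hexists
  -- final measurements
  set Vb : HMat (Fin d) := (Vm d j k).map (starRingEnd ℂ) with hVbdef
  set EA' : A → X → HMat (Fin d) :=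
    fun a x => (Vm d j k * U)ᴴ * EA a x * (Vm d j k * U) with hEA'def
  set EB' : B → Y → HMat (Fin d) := fun b y => Vbᴴ * EB b y * Vb with hEB'def
  have hUU : Uᴴ * U = 1 := by
    rw [← Matrix.star_eq_conjTranspose]
    exact (Unitary.mem_iff.mp hU).1
  have hVU : (Vm d j k * U)ᴴ * (Vm d j k * U) = 1 := by
    rw [Matrix.conjTranspose_mul]
    have : Uᴴ * (Vm d j k)ᴴ * (Vm d j k * U) = Uᴴ * ((Vm d j k)ᴴ * Vm d j k) * U := by
      noncomm_ring
    rw [this, Vm_unitary, Matrix.mul_one, hUU]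
  have hEA' : IsPOVM EA' := povm_conj hEA _ hVU
  have hEB' : IsPOVM EB' := povm_conj hEB _ (map_star_unitary (Vm_unitary d j k))
  set Q : Matrix (Fin d × Fin d) (Fin d × Fin d) ℂ := (Vm d j k * U) ⊗ₖ Vb with hQdef
  have hQg : gw d j k * (U ⊗ₖ (1 : HMat (Fin d))) = Q := by
    rw [hQdef, hVbdef]
    unfold gw
    rw [← Matrix.mul_kronecker_mul, Matrix.mul_one]
  have hWQ : Qᴴ * W * Q
      = ∑ x, ∑ y, ∑ a, ∑ b, ((Bf a b x y : ℝ) : ℂ) • (EA' a x ⊗ₖ EB' b y) := by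
    rw [hWdef]
    simp only [Finset.mul_sum, Finset.sum_mul, Matrix.mul_smul, Matrix.smul_mul]
    refine Finset.sum_congr rfl fun x _ => Finset.sum_congr rfl fun y _ =>
      Finset.sum_congr rfl fun a _ => Finset.sum_congr rfl fun b _ => ?_
    rw [hQdef]
    congr 1
    rw [hEA'def, hEB'def]
    exact (kron_sandwich _ _ _ _).symm
  have hbell_final : bellValue Bf (quantumCorr ρ EA' EB')
      = ((ρ'' * ((gw d j k)ᴴ * W * gw d j k)).trace).re := by
    rw [bell_trace, ← hWQ]
    congr 1
    rw [trace_conj_comm ρ W Q, trace_conj_comm ρ'' W (gw d j k)]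
    congr 1
    rw [← hQg, Matrix.conjTranspose_mul, hρ''def]
    simp only [Matrix.mul_assoc]
  have hfinal : localBound Bf < bellValue Bf (quantumCorr ρ EA' EB') := by
    rw [hbell_final]
    exact hjk
  refine ⟨EA', EB', hEA', hEB', ?_, ?_⟩
  · exact (one_lt_div hω).mpr hfinal
  · intro hLHV
    have hle := lhv_bellValue_le_localBound Bf hBf hLHV
    linarith

end QSteer

end
end
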